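/- arXiv:0908.1942 — 12 statements merged into one kernel-verified Lean document; each statement's English description precedes it below -/
import Mathlib

section
/- Let λ < θ be infinite cardinals with θ regular, and let (x_γ)_{γ<θ} be an orthonormal family of vectors in ℓ²(θ). Then there exists an ordinal γ₀ < θ such that for every γ with γ₀ ≤ γ < θ, the vector x_γ is orthogonal to ℓ²(λ); that is, x_γ(ξ) = 0 for every coordinate ξ < λ. -/
open Cardinal
open scoped InnerProductSpace

noncomputable section

/-- `ℓ²(θ)`: the complex Hilbert space of square-summable functions on the ordinal `θ.ord`
(realized as the type `θ.ord.ToType`). -/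
abbrev L2 (θ : Cardinal) : Type := lp (fun _ : θ.ord.ToType => ℂ) 2

/-- A coordinate `ξ` of `ℓ²(θ)` "lies below `lam`" if the corresponding ordinal is `< lam.ord`. -/
def coordBelow (θ : Cardinal) (lam : Cardinal) (ξ : θ.ord.ToType) : Prop :=
  ((Ordinal.ToType.mk (o := θ.ord)).symm ξ : Ordinal) < lam.ord

/-- if `λ < θ` are infinite cardinals, `θ` is regular, and `(x_γ)_{γ<θ}` is an
orthonormal family in `ℓ²(θ)`, then there is `γ₀ < θ` such that every `x_γ` with `γ ≥ γ₀`
is orthogonal to `ℓ²(λ)`, i.e. vanishes on all coordinates `ξ < λ`. -/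
theorem stmt0 (lam θ : Cardinal) (hlam : ℵ₀ ≤ lam) (hlt : lam < θ) (hreg : θ.IsRegular)
    (x : θ.ord.ToType → L2 θ) (hx : Orthonormal ℂ x) :
    ∃ γ₀ : θ.ord.ToType, ∀ γ : θ.ord.ToType, γ₀ ≤ γ →
      ∀ ξ : θ.ord.ToType, coordBelow θ lam ξ → x γ ξ = 0 := by
  classical
  set S : θ.ord.ToType → Set θ.ord.ToType := fun ξ => {γ | x γ ξ ≠ 0} with hS
  have hScount : ∀ ξ, (S ξ).Countable := by
    intro ξ
    have hsum : Summable fun γ => ‖⟪x γ, lp.single 2 ξ (1 : ℂ)⟫_ℂ‖ ^ 2 :=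
      hx.inner_products_summable _
    have hcs := hsum.countable_support
    refine Set.Countable.mono ?_ hcs
    intro γ hγ
    simp only [hS, Set.mem_setOf_eq] at hγ
    simp only [Function.mem_support]
    rw [lp.inner_single_right]
    simp [RCLike.inner_apply, pow_eq_zero_iff, hγ]
  set B : Set θ.ord.ToType := ⋃ ξ : {ξ // coordBelow θ lam ξ}, S ξ.1 with hBdef
  have hidx : #{ξ // coordBelow θ lam ξ} ≤ lam := by
    have hmk : #lam.ord.ToType = lam := Cardinal.mk_ord_toType lam
    refine le_trans ?_ hmk.le
    refine Cardinal.mk_le_of_injective (f := fun ξ : {ξ // coordBelow θ lam ξ} =>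
      (Ordinal.ToType.mk (o := lam.ord)) ⟨((Ordinal.ToType.mk (o := θ.ord)).symm ξ.1 : Ordinal), ξ.2⟩) ?_
    intro a b hab
    have hval : ((Ordinal.ToType.mk (o := θ.ord)).symm a.1 : Ordinal) = (Ordinal.ToType.mk (o := θ.ord)).symm b.1 :=
      Subtype.mk_eq_mk.1 ((Ordinal.ToType.mk (o := lam.ord)).injective hab)
    exact Subtype.ext ((Ordinal.ToType.mk (o := θ.ord)).symm.injective (Subtype.ext hval))
  have hB : #B < θ := by
    have h1 : #B ≤ #{ξ // coordBelow θ lam ξ} * ⨆ ξ : {ξ // coordBelow θ lam ξ}, #(S ξ.1) :=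
      Cardinal.mk_iUnion_le _
    have h2 : (⨆ ξ : {ξ // coordBelow θ lam ξ}, #(S ξ.1)) ≤ ℵ₀ := by
      refine ciSup_le' fun ξ => ?_
      exact (hScount ξ.1).le_aleph0
    have h3 : #B ≤ lam * ℵ₀ := h1.trans (mul_le_mul' hidx h2)
    have h4 : lam * ℵ₀ = lam := Cardinal.mul_eq_left hlam hlam Cardinal.aleph0_ne_zero
    calc #B ≤ lam := h3.trans_eq h4
      _ < θ := hlt
  -- bound the bad set
  have hcof : #B < θ.ord.cof := by rwa [hreg.cof_eq]
  have hlsub : Ordinal.lsub (fun b : B => ((Ordinal.ToType.mk (o := θ.ord)).symm b.1 : Ordinal)) < θ.ord :=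
    Ordinal.lsub_lt_ord hcof fun b => ((Ordinal.ToType.mk (o := θ.ord)).symm b.1).2
  have ha : Ordinal.lsub (fun b : B => ((Ordinal.ToType.mk (o := θ.ord)).symm b.1 : Ordinal)) ∈ Set.Iio θ.ord := hlsub
  refine ⟨(Ordinal.ToType.mk (o := θ.ord)) ⟨_, ha⟩, ?_⟩
  intro γ hγ ξ hξ
  by_contra hne
  have hmem : γ ∈ B := Set.mem_iUnion.2 ⟨⟨ξ, hξ⟩, hne⟩
  have hlt1 : ((Ordinal.ToType.mk (o := θ.ord)).symm γ : Ordinal) <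
      Ordinal.lsub (fun b : B => ((Ordinal.ToType.mk (o := θ.ord)).symm b.1 : Ordinal)) :=
    Ordinal.lt_lsub (fun b : B => ((Ordinal.ToType.mk (o := θ.ord)).symm b.1 : Ordinal)) ⟨γ, hmem⟩
  have hle : (Ordinal.lsub (fun b : B => ((Ordinal.ToType.mk (o := θ.ord)).symm b.1 : Ordinal))) ≤
      ((Ordinal.ToType.mk (o := θ.ord)).symm γ : Ordinal) := by
    have := (Ordinal.ToType.mk (o := θ.ord)).symm.monotone hγ
    simp at this
    exact this
  exact absurd hlt1 hle.not_gt
end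
end

section
/- Let λ be an infinite cardinal, let (η_i)_{i∈I} be an orthonormal family in a complex Hilbert space H, let E be a closed subspace of H admitting a dense subset of cardinality at most λ, and let q : H → E be the orthogonal projection. Then the set {i ∈ I : q(η_i) ≠ 0} has cardinality at most λ. -/
open Cardinal

noncomputable section

universe u

/-- if `λ` is an infinite cardinal, `(η_i)_{i ∈ I}` is an orthonormal family in a
complex Hilbert space `H`, `E` is a closed subspace of `H` admitting a dense subset of
cardinality at most `λ`, and `q` is the orthogonal projection onto `E`, then
`{i ∈ I : q(η_i) ≠ 0}` has cardinality at most `λ`. -/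
theorem stmt3 (lam : Cardinal.{u}) (hlam : ℵ₀ ≤ lam)
    {H : Type u} [NormedAddCommGroup H] [InnerProductSpace ℂ H] [CompleteSpace H]
    {I : Type u} (η : I → H) (hη : Orthonormal ℂ η)
    (E : Submodule ℂ H) (hclosed : IsClosed (E : Set H)) [CompleteSpace E]
    (hdense : ∃ D : Set E, Dense D ∧ #D ≤ lam) :
    #{i : I | E.orthogonalProjectionOnto (η i) ≠ 0} ≤ lam := by
  obtain ⟨D, hD, hDcard⟩ := hdense
  -- The bad set is contained in the union over d ∈ D of {i | ⟪η i, d⟫ ≠ 0}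
  have hsub : {i : I | E.orthogonalProjectionOnto (η i) ≠ 0} ⊆
      ⋃ d : D, {i : I | inner ℂ (η i) ((d : E) : H) ≠ (0 : ℂ)} := by
    intro i hi
    simp only [Set.mem_setOf_eq] at hi
    -- η i is not orthogonal to E
    have hne : η i ∉ Eᗮ := fun h => hi (Submodule.orthogonalProjectionOnto_eq_zero_iff.mpr h)
    obtain ⟨v, hvE, hv⟩ : ∃ v ∈ E, inner ℂ (η i) v ≠ (0 : ℂ) := by
      by_contra h
      push_neg at h
      exact hne ((Submodule.mem_orthogonal' E (η i)).mpr h)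
    -- the set of w ∈ E with ⟪η i, w⟫ ≠ 0 is open and nonempty; density gives d ∈ D
    have hcont : Continuous fun w : E => inner ℂ (η i) ((w : E) : H) :=
      (continuous_inner.comp (by fun_prop : Continuous fun w : E =>
        ((η i, ((w : E) : H)) : H × H)))
    have hopen : IsOpen {w : E | inner ℂ (η i) ((w : E) : H) ≠ (0 : ℂ)} :=
      isOpen_compl_iff.mpr (isClosed_singleton.preimage hcont)
    have hnonempty : {w : E | inner ℂ (η i) ((w : E) : H) ≠ (0 : ℂ)}.Nonempty :=
      ⟨⟨v, hvE⟩, hv⟩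
    obtain ⟨d, hdD, hd⟩ := hD.exists_mem_open hopen hnonempty
    exact Set.mem_iUnion.mpr ⟨⟨d, hdD⟩, hd⟩
  calc #{i : I | E.orthogonalProjectionOnto (η i) ≠ 0}
      ≤ #(⋃ d : D, {i : I | inner ℂ (η i) ((d : E) : H) ≠ (0 : ℂ)}) := mk_le_mk_of_subset hsub
    _ ≤ sum fun d : D => #{i : I | inner ℂ (η i) ((d : E) : H) ≠ (0 : ℂ)} := mk_iUnion_le_sum_mk
    _ ≤ sum fun _ : D => ℵ₀ := by
        refine sum_le_sum _ _ fun d => ?_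
        have hsum : Summable fun i : I => ‖(inner ℂ (η i) ((d : E) : H) : ℂ)‖ ^ 2 :=
          hη.inner_products_summable (((d : E) : H))
        have hct : {i : I | inner ℂ (η i) ((d : E) : H) ≠ (0 : ℂ)}.Countable := by
          have := hsum.countable_support
          refine this.mono fun i hi => ?_
          simp only [Function.mem_support]
          simp only [Set.mem_setOf_eq] at hi
          exact pow_ne_zero 2 (norm_ne_zero_iff.mpr hi)
        exact mk_le_aleph0_iff.mpr hct
    _ = #D * ℵ₀ := by rw [sum_const']
    _ ≤ lam * lam := mul_le_mul' hDcard hlam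
    _ = lam := mul_eq_self hlam
end
end

section
/- Let λ < θ be infinite cardinals with θ regular and λ^ℵ₀ ≥ θ. Then there exists a dense linear subspace K of ℓ²(θ) such that the restriction of p_λ to K has trivial kernel; that is, the only vector x ∈ K with x(ξ) = 0 for all ξ < λ is x = 0. -/
open Cardinal

noncomputable section

namespace Stmt4Aux

open Function Filter ENNReal

variable {ι : Type} [DecidableEq ι]

/-- Evaluation at a coordinate, as a continuous linear map on `ℓ²`. -/
def evalCLM (ξ : ι) : lp (fun _ : ι => ℂ) 2 →L[ℂ] ℂ :=
  LinearMap.mkContinuous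
    { toFun := fun f => f ξ
      map_add' := fun f g => by simp [lp.coeFn_add]
      map_smul' := fun c f => by simp [lp.coeFn_smul] }
    1 (fun f => by
      rw [one_mul]; exact lp.norm_apply_le_norm (p := 2) (by norm_num) f ξ)

@[simp] lemma evalCLM_apply (ξ : ι) (f : lp (fun _ : ι => ℂ) 2) : evalCLM ξ f = f ξ := rfl

/-- The summands of the "tree vector". -/
def Vfam (m : ℕ → ι) : ℕ → lp (fun _ : ι => ℂ) 2 :=
  fun n => ((2 : ℂ)⁻¹) ^ n • lp.single 2 (m n) (1 : ℂ)

lemma norm_Vfam (m : ℕ → ι) (n : ℕ) : ‖Vfam m n‖ = (2⁻¹ : ℝ) ^ n := by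
  have hp : 0 < (2 : ℝ≥0∞) := by norm_num
  have h1 : ‖lp.single (E := fun _ : ι => ℂ) 2 (m n) (1 : ℂ)‖ = ‖(1 : ℂ)‖ :=
    lp.norm_single (E := fun _ : ι => ℂ) (p := 2) hp (m n) (1 : ℂ)
  rw [Vfam, norm_smul, h1, norm_pow, norm_inv]
  norm_num

lemma summable_norm_Vfam (m : ℕ → ι) : Summable fun n => ‖Vfam m n‖ := by
  simp only [norm_Vfam]
  exact summable_geometric_of_lt_one (by norm_num) (by norm_num)

lemma summable_Vfam (m : ℕ → ι) : Summable (Vfam m) :=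
  Summable.of_norm (summable_norm_Vfam m)

/-- The "tree vector" attached to a sequence of coordinates. -/
def V (m : ℕ → ι) : lp (fun _ : ι => ℂ) 2 := ∑' n, Vfam m n

lemma norm_V_le (m : ℕ → ι) : ‖V m‖ ≤ 2 := by
  have h := norm_tsum_le_tsum_norm (summable_norm_Vfam m)
  have h2 : ∑' n, ‖Vfam m n‖ = 2 := by
    simp only [norm_Vfam]
    rw [tsum_geometric_of_lt_one (by norm_num) (by norm_num)]
    norm_num
  rw [V]
  exact h.trans h2.le

lemma V_apply (m : ℕ → ι) (ξ : ι) :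
    V m ξ = ∑' n, ((2 : ℂ)⁻¹) ^ n * ((lp.single 2 (m n) (1 : ℂ) : ∀ _ : ι, ℂ) ξ) := by
  have h := (evalCLM ξ).map_tsum (summable_Vfam m)
  simpa only [V, evalCLM_apply, Vfam, lp.coeFn_smul, Pi.smul_apply, smul_eq_mul] using h

lemma V_apply_self (m : ℕ → ι) (hm : Injective m) (N : ℕ) :
    V m (m N) = ((2 : ℂ)⁻¹) ^ N := by
  rw [V_apply]
  rw [tsum_eq_single N (fun n hn => by
    rw [lp.single_apply_ne 2 (m n) _ (fun (h : m N = m n) => hn (hm h).symm), mul_zero])]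
  rw [lp.single_apply_self, mul_one]

lemma V_apply_notin (m : ℕ → ι) (ξ : ι) (h : ∀ n, ξ ≠ m n) : V m ξ = 0 := by
  rw [V_apply]
  have : ∀ n : ℕ, ((2 : ℂ)⁻¹) ^ n * ((lp.single 2 (m n) (1 : ℂ) : ∀ _ : ι, ℂ) ξ) = 0 :=
    fun n => by rw [lp.single_apply_ne 2 (m n) _ (h n), mul_zero]
  rw [tsum_congr this, tsum_zero]


lemma range_map_eq_iff {α : Type*} {f g : ℕ → α} {N n : ℕ}
    (h : (List.range N).map f = (List.range n).map g) : N = n ∧ ∀ k < N, f k = g k := by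
  have hlen : N = n := by simpa using congrArg List.length h
  subst hlen
  refine ⟨rfl, fun k hk => ?_⟩
  have h2 := congrArg (fun L => L[k]?) h
  simpa [List.getElem?_map, List.getElem?_range, hk] using h2

end Stmt4Aux

open Stmt4Aux

/-- if `λ < θ` are infinite cardinals with `θ` regular and `λ^ℵ₀ ≥ θ`, then
there is a dense linear subspace `K` of `ℓ²(θ)` on which the projection `p_λ` onto the first
`λ` coordinates has trivial kernel: the only `x ∈ K` vanishing on all coordinates `ξ < λ`
is `x = 0`. -/
theorem stmt4 (lam θ : Cardinal) (hlam : ℵ₀ ≤ lam) (hlt : lam < θ) (hreg : θ.IsRegular)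
    (hpow : θ ≤ lam ^ ℵ₀) :
    ∃ K : Submodule ℂ (L2 θ), Dense (K : Set (L2 θ)) ∧
      ∀ x ∈ K, (∀ ξ : θ.ord.ToType, coordBelow θ lam ξ → x ξ = 0) → x = 0 := by
  classical
  have hθ : ℵ₀ ≤ θ := hlam.trans hlt.le
  set Λ := {ξ : θ.ord.ToType // coordBelow θ lam ξ} with hΛdef
  -- `lam ≤ #Λ`
  have hord : lam.ord < θ.ord := Cardinal.ord_lt_ord.2 hlt
  have hj : ∃ j : lam.ord.ToType → Λ, Function.Injective j := by
    refine ⟨fun ξ => ⟨(Ordinal.ToType.mk (o := θ.ord))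
      ⟨((Ordinal.ToType.mk (o := lam.ord)).symm ξ : Ordinal),
        Set.mem_Iio.mpr (lt_trans (Set.mem_Iio.mp ((Ordinal.ToType.mk (o := lam.ord)).symm ξ).2) hord)⟩, ?_⟩, ?_⟩
    · show ((Ordinal.ToType.mk (o := θ.ord)).symm _ : Ordinal) < lam.ord
      rw [OrderIso.symm_apply_apply]
      exact Set.mem_Iio.mp ((Ordinal.ToType.mk (o := lam.ord)).symm ξ).2
    · intro a b hab
      have h1 := congrArg Subtype.val hab
      have h2 := (Ordinal.ToType.mk (o := θ.ord)).injective h1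
      have h3 := congrArg Subtype.val h2
      exact (Ordinal.ToType.mk (o := lam.ord)).symm.injective (Subtype.ext h3)
  have hΛ : lam ≤ #Λ := by
    obtain ⟨j, hjinj⟩ := hj
    have h := Cardinal.mk_le_of_injective hjinj
    rwa [Cardinal.mk_toType, Cardinal.card_ord] at h
  haveI : Infinite Λ := Cardinal.infinite_iff.mpr (hlam.trans hΛ)
  obtain ⟨code⟩ : Nonempty (List Λ ↪ Λ) :=
    (Cardinal.le_def _ _).mp (Cardinal.mk_list_eq_mk Λ).le
  have hcard : #(θ.ord.ToType × ℕ) ≤ #(ℕ → Λ) := by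
    have h1 : #(θ.ord.ToType × ℕ) = θ := by
      rw [Cardinal.mk_prod, Cardinal.lift_id, Cardinal.lift_id, Cardinal.mk_toType,
        Cardinal.card_ord, Cardinal.mk_nat, Cardinal.mul_eq_max hθ le_rfl, max_eq_left hθ]
    have h2 : #(ℕ → Λ) = #Λ ^ ℵ₀ := by rw [← Cardinal.power_def, Cardinal.mk_nat]
    rw [h1, h2]
    exact hpow.trans (Cardinal.power_le_power_right hΛ)
  obtain ⟨Enc⟩ : Nonempty ((θ.ord.ToType × ℕ) ↪ (ℕ → Λ)) := (Cardinal.le_def _ _).mp hcard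
  set mf : θ.ord.ToType × ℕ → ℕ → θ.ord.ToType :=
    fun p n => ((code ((List.range n).map (Enc p)) : Λ) : θ.ord.ToType) with hmfdef
  have hmf_eq : ∀ p q N n, mf p N = mf q n → N = n ∧ ∀ k < N, Enc p k = Enc q k := by
    intro p q N n h
    exact range_map_eq_iff (code.injective (Subtype.ext h))
  have hmf_inj : ∀ p, Function.Injective (mf p) := fun p N n h => (hmf_eq p p N n h).1
  set g : θ.ord.ToType × ℕ → L2 θ :=
    fun p => lp.single 2 p.1 (1 : ℂ) + (((p.2 : ℂ) + 1)⁻¹) • V (mf p) with hgdef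
  set K := Submodule.span ℂ (Set.range g) with hKdef
  have hsingle : ∀ (ξ : θ.ord.ToType) (a : ℂ), lp.single 2 ξ a ∈ K.topologicalClosure := by
    intro ξ a
    have h1 : lp.single (E := fun _ : θ.ord.ToType => ℂ) 2 ξ (1 : ℂ) ∈ K.topologicalClosure := by
      rw [← SetLike.mem_coe, Submodule.topologicalClosure_coe]
      refine mem_closure_of_tendsto (b := Filter.atTop) (f := fun n : ℕ => g (ξ, n)) ?_
        (Filter.Eventually.of_forall fun n => Submodule.subset_span ⟨(ξ, n), rfl⟩)
      rw [← tendsto_sub_nhds_zero_iff]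
      refine squeeze_zero_norm (a := fun n : ℕ => 2 * ((n : ℝ) + 1)⁻¹) (fun n => ?_) ?_
      · have hg : g (ξ, n) - lp.single 2 ξ (1 : ℂ) = (((n : ℂ) + 1)⁻¹) • V (mf (ξ, n)) := by
          rw [hgdef]
          exact add_sub_cancel_left _ _
        rw [hg, norm_smul]
        have hn : ‖((n : ℂ) + 1)⁻¹‖ = ((n : ℝ) + 1)⁻¹ := by
          rw [norm_inv]
          have hcast : ((n : ℂ) + 1) = ((n + 1 : ℕ) : ℂ) := by push_cast; ring
          rw [hcast, Complex.norm_natCast]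
          push_cast; ring
        rw [hn, mul_comm]
        exact mul_le_mul_of_nonneg_right (norm_V_le _) (by positivity)
      · have h := tendsto_one_div_add_atTop_nhds_zero_nat.const_mul (2 : ℝ)
        simpa [one_div] using h
    have h2 := K.topologicalClosure.smul_mem a h1
    rwa [← lp.single_smul, smul_eq_mul, mul_one] at h2
  have htop : K.topologicalClosure = ⊤ := by
    rw [eq_top_iff]
    rintro x -
    have hx : HasSum (fun ξ => lp.single 2 ξ (x ξ)) x :=
      lp.hasSum_single ENNReal.ofNat_ne_top x
    exact (Submodule.isClosed_topologicalClosure K).mem_of_tendsto hx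
      (Filter.Eventually.of_forall fun s => Submodule.sum_mem _ fun ξ _ => hsingle ξ (x ξ))
  refine ⟨K, ?_, ?_⟩
  · rw [dense_iff_closure_eq, ← Submodule.topologicalClosure_coe, htop, Submodule.top_coe]
  · intro x hxK hvan
    rw [hKdef, Finsupp.mem_span_range_iff_exists_finsupp] at hxK
    obtain ⟨c, hc⟩ := hxK
    suffices hzero : ∀ p ∈ c.support, c p = 0 by
      have hc0 : c = 0 := Finsupp.ext fun p => by
        by_cases hp : p ∈ c.support
        · exact hzero p hp
        · exact Finsupp.notMem_support_iff.mp hp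
      rw [← hc, hc0, Finsupp.sum_zero_index]
    intro p₀ hp₀
    set A : θ.ord.ToType × ℕ → θ.ord.ToType × ℕ → ℕ := fun p q =>
      (if h : Enc p ≠ Enc q then (Function.ne_iff.mp h).choose + 1 else 0) +
      (if h : ∃ n, mf p n = q.1 then h.choose + 1 else 0) with hAdef
    set N := c.support.sup fun p => c.support.sup fun q => A p q with hNdef
    have hAle : ∀ p ∈ c.support, ∀ q ∈ c.support, A p q ≤ N := fun p hp q hq =>
      le_trans (Finset.le_sup (f := fun q => A p q) hq)
        (Finset.le_sup (f := fun p => c.support.sup fun q => A p q) hp)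
    have hF1 : ∀ p ∈ c.support, ∀ q ∈ c.support, p ≠ q →
        (List.range N).map (Enc p) ≠ (List.range N).map (Enc q) := by
      intro p hp q hq hpq hlist
      have hne : Enc p ≠ Enc q := fun hE => hpq (Enc.injective hE)
      have hk0spec : Enc p (Function.ne_iff.mp hne).choose ≠
          Enc q (Function.ne_iff.mp hne).choose := (Function.ne_iff.mp hne).choose_spec
      have hk0N : (Function.ne_iff.mp hne).choose < N := by
        have h1 : (Function.ne_iff.mp hne).choose + 1 ≤ A p q := by
          rw [hAdef]
          simp only [dif_pos hne]
          exact Nat.le_add_right _ _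
        have h2 := hAle p hp q hq
        omega
      exact hk0spec ((range_map_eq_iff hlist).2 _ hk0N)
    have hF2 : ∀ p ∈ c.support, ∀ q ∈ c.support, mf p N ≠ q.1 := by
      intro p hp q hq heq
      have hex : ∃ n, mf p n = q.1 := ⟨N, heq⟩
      have hspec : mf p hex.choose = q.1 := hex.choose_spec
      have hNe : N = hex.choose := hmf_inj p (heq.trans hspec.symm)
      have h1 : hex.choose + 1 ≤ A p q := by
        rw [hAdef]
        simp only [dif_pos hex]
        exact Nat.le_add_left _ _
      have h2 := hAle p hp q hq
      omega
    set χ := mf p₀ N with hχdef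
    have hχbelow : coordBelow θ lam χ := (code ((List.range N).map (Enc p₀))).2
    have hval := congrArg (evalCLM (ι := θ.ord.ToType) χ) hc
    rw [map_finsuppSum] at hval
    have hterm : ∀ p ∈ c.support, evalCLM (ι := θ.ord.ToType) χ ((c p) • g p) =
        (if p = p₀ then c p * (((p.2 : ℂ) + 1)⁻¹ * ((2 : ℂ)⁻¹) ^ N) else 0) := by
      intro p hp
      have hsingle0 : (lp.single (E := fun _ : θ.ord.ToType => ℂ) 2 p.1 (1 : ℂ) :
          ∀ _ : θ.ord.ToType, ℂ) χ = 0 :=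
        lp.single_apply_ne 2 p.1 _ (hF2 p₀ hp₀ p hp)
      by_cases hpp : p = p₀
      · subst hpp
        have hV : V (mf p) χ = ((2 : ℂ)⁻¹) ^ N := V_apply_self (mf p) (hmf_inj p) N
        rw [if_pos rfl, map_smul, smul_eq_mul, evalCLM_apply, hgdef]
        simp only [lp.coeFn_add, Pi.add_apply, lp.coeFn_smul, Pi.smul_apply, hsingle0, hV,
          zero_add, smul_eq_mul]
      · have hV : V (mf p) χ = 0 := by
          refine V_apply_notin (mf p) χ (fun n hn => ?_)
          have hlist : (List.range N).map (Enc p₀) = (List.range n).map (Enc p) :=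
            code.injective (Subtype.ext hn)
          have hNn : N = n := by simpa using congrArg List.length hlist
          exact hF1 p₀ hp₀ p hp (Ne.symm hpp) (hNn ▸ hlist)
        rw [if_neg hpp, map_smul, smul_eq_mul, evalCLM_apply, hgdef]
        simp only [lp.coeFn_add, Pi.add_apply, lp.coeFn_smul, Pi.smul_apply, hsingle0, hV,
          smul_eq_mul, mul_zero, add_zero, zero_add]
    have hsum : (c.sum fun p a => evalCLM (ι := θ.ord.ToType) χ (a • g p)) =
        c p₀ * (((p₀.2 : ℂ) + 1)⁻¹ * ((2 : ℂ)⁻¹) ^ N) := by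
      rw [Finsupp.sum, Finset.sum_congr rfl hterm,
        Finset.sum_ite_eq' c.support p₀ (fun p => c p * (((p.2 : ℂ) + 1)⁻¹ * ((2 : ℂ)⁻¹) ^ N)),
        if_pos hp₀]
    rw [hsum, evalCLM_apply, hvan χ hχbelow] at hval
    have h1 : (((p₀.2 : ℂ) + 1)⁻¹ * ((2 : ℂ)⁻¹) ^ N) ≠ 0 :=
      mul_ne_zero (inv_ne_zero (Nat.cast_add_one_ne_zero p₀.2))
        (pow_ne_zero _ (inv_ne_zero two_ne_zero))
    exact (mul_eq_zero.mp hval).resolve_right h1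
end
end

section
/- Let λ < θ be infinite cardinals and let K be a linear subspace of ℓ²(θ) such that the restriction of the projection p_λ to K is injective (equivalently, no nonzero vector of K vanishes on all coordinates ξ < λ). Then every orthonormal family of vectors contained in K has cardinality at most λ. -/
open Cardinal

noncomputable section

/-- if `λ < θ` are infinite cardinals and `K` is a linear subspace of `ℓ²(θ)`
such that no nonzero vector of `K` vanishes on all coordinates `ξ < λ` (i.e. `p_λ` is
injective on `K`), then every orthonormal family of vectors contained in `K` has cardinality
at most `λ`. -/
theorem stmt5 (lam θ : Cardinal) (hlam : ℵ₀ ≤ lam) (hlt : lam < θ)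
    (K : Submodule ℂ (L2 θ))
    (hinj : ∀ x ∈ K, (∀ ξ : θ.ord.ToType, coordBelow θ lam ξ → x ξ = 0) → x = 0)
    {ι : Type} (v : ι → L2 θ) (hv : Orthonormal ℂ v) (hvK : ∀ i, v i ∈ K) :
    #ι ≤ lam := by
  classical
  have hvne : ∀ i, v i ≠ 0 := fun i => hv.ne_zero i
  have hex : ∀ i, ∃ ξ, coordBelow θ lam ξ ∧ v i ξ ≠ 0 := by
    intro i
    by_contra h
    push_neg at h
    exact hvne i (hinj _ (hvK i) h)
  choose f hf1 hf2 using hex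
  set S := {ξ : θ.ord.ToType // coordBelow θ lam ξ} with hS
  let F : ι → S := fun i => ⟨f i, hf1 i⟩
  -- each fiber of F is countable, by Bessel's inequality
  have hfib : ∀ ξ : S, #{i // F i = ξ} ≤ ℵ₀ := by
    intro ξ
    have hsum : Summable fun i => ‖(inner ℂ (v i) (lp.single 2 ξ.1 (1 : ℂ)) : ℂ)‖ ^ 2 :=
      hv.inner_products_summable _
    have hcs : (Function.support fun i =>
        ‖(inner ℂ (v i) (lp.single 2 ξ.1 (1 : ℂ)) : ℂ)‖ ^ 2).Countable :=
      hsum.countable_support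
    have hsub : {i | F i = ξ} ⊆ Function.support fun i =>
        ‖(inner ℂ (v i) (lp.single 2 ξ.1 (1 : ℂ)) : ℂ)‖ ^ 2 := by
      intro i hi
      have hiξ : f i = ξ.1 := congrArg Subtype.val hi
      have hne : (inner ℂ (v i) (lp.single 2 ξ.1 (1 : ℂ)) : ℂ) ≠ 0 := by
        rw [lp.inner_single_right]
        simp only [RCLike.inner_apply, map_one, mul_one, one_mul, ne_eq]
        rw [starRingEnd_apply, star_eq_zero]
        rw [← hiξ]
        exact hf2 i
      simp [Function.mem_support, hne]
    have : ({i | F i = ξ} : Set ι).Countable := hcs.mono hsub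
    rw [Cardinal.mk_le_aleph0_iff]
    exact Set.countable_coe_iff.mpr this
  -- cardinality of S is at most lam
  have hSle : #S ≤ lam := by
    have hord : lam.ord ≤ θ.ord := Cardinal.ord_le_ord.mpr hlt.le
    let G : S → lam.ord.ToType := fun ξ =>
      (Ordinal.ToType.mk (o := lam.ord)) ⟨((Ordinal.ToType.mk (o := θ.ord)).symm ξ.1 : Ordinal), ξ.2⟩
    have hGinj : Function.Injective G := by
      intro a b hab
      have := (Ordinal.ToType.mk (o := lam.ord)).injective hab
      have h2 := Subtype.ext_iff.mp this
      have h3 : (Ordinal.ToType.mk (o := θ.ord)).symm a.1 = (Ordinal.ToType.mk (o := θ.ord)).symm b.1 :=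
        Subtype.ext h2
      exact Subtype.ext ((Ordinal.ToType.mk (o := θ.ord)).symm.injective h3)
    calc #S ≤ #lam.ord.ToType := Cardinal.mk_le_of_injective hGinj
      _ = lam.ord.card := Cardinal.mk_toType _
      _ = lam := Cardinal.card_ord _
  -- combine: ι is a union over S of countable fibers
  calc #ι = #(Σ ξ : S, {i // F i = ξ}) := (Cardinal.mk_congr (Equiv.sigmaFiberEquiv F)).symm
    _ = Cardinal.sum fun ξ : S => #{i // F i = ξ} := Cardinal.mk_sigma _
    _ ≤ Cardinal.sum fun _ : S => ℵ₀ := Cardinal.sum_le_sum _ _ hfib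
    _ = #S * ℵ₀ := Cardinal.sum_const' _ _
    _ ≤ lam * ℵ₀ := by
        exact mul_le_mul' hSle le_rfl
    _ = lam := by
        rw [Cardinal.mul_eq_max hlam le_rfl, max_eq_left hlam]
end
end

section
/- Let λ < θ be infinite cardinals with θ regular and λ^ℵ₀ ≥ θ, and let (z_γ)_{γ<θ} be a family of vectors whose set of values is dense in ℓ²(θ). Then there exist vectors y_{γ,m} ∈ ℓ²(θ), for γ < θ and positive integers m, such that ‖y_{γ,m} − z_γ‖ ≤ 1/m for all γ and m, and the family of projections (p_λ(y_{γ,m}))_{γ<θ, m∈ℕ⁺} is linearly independent over ℂ. -/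
open Cardinal
open scoped ENNReal

noncomputable section

/-- The projection `p_λ` of `x ∈ ℓ²(θ)` to its coordinates `ξ < λ`, recorded as a plain
function on the coordinates below `λ` (the linear injection of `ℓ²(λ)` into functions makes
this faithful for linear-independence statements). -/
def restrictBelow (θ lam : Cardinal) (x : L2 θ) :
    {ξ : θ.ord.ToType // coordBelow θ lam ξ} → ℂ :=
  fun ξ => x ξ.1

private theorem li_aux {ι κ M : Type*} [LinearOrder κ] [AddCommGroup M] [Module ℂ M]
    (e : ι → κ) (he : Function.Injective e) (v : ι → M)
    (h : ∀ i, v i ∉ Submodule.span ℂ (v '' {j | e j < e i})) :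
    LinearIndependent ℂ v := by
  classical
  rw [linearIndependent_iff']
  intro s c hsum i hi
  by_contra hci
  set t := s.filter fun j => c j ≠ 0 with ht
  have hne : t.Nonempty := ⟨i, Finset.mem_filter.2 ⟨hi, hci⟩⟩
  obtain ⟨i0, hi0t, hmax⟩ := Finset.exists_max_image t e hne
  have hc0 : c i0 ≠ 0 := (Finset.mem_filter.1 hi0t).2
  have hsum' : ∑ j ∈ t, c j • v j = 0 := by
    rw [← hsum]
    exact Finset.sum_filter_of_ne (fun j _ hj => by
      intro h0; exact hj (by rw [h0, zero_smul]))
  have hmem' : c i0 • v i0 = -∑ j ∈ t.erase i0, c j • v j := by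
    refine eq_neg_of_add_eq_zero_left ?_
    rw [add_comm, Finset.sum_erase_add t _ hi0t]; exact hsum'
  have hmem : c i0 • v i0 ∈ Submodule.span ℂ (v '' {j | e j < e i0}) := by
    rw [hmem']
    refine neg_mem (Submodule.sum_mem _ fun j hj => Submodule.smul_mem _ _ (Submodule.subset_span ?_))
    refine ⟨j, ?_, rfl⟩
    have hjt := Finset.mem_of_mem_erase hj
    have hne' : j ≠ i0 := Finset.ne_of_mem_erase hj
    exact lt_of_le_of_ne (hmax j hjt) fun hEq => hne' (he hEq)
  exact h i0 (by
    have := Submodule.smul_mem _ (c i0)⁻¹ hmem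
    rwa [inv_smul_smul₀ hc0] at this)

open Set Submodule in
/-- if `λ < θ` are infinite cardinals with `θ` regular and `λ^ℵ₀ ≥ θ`, and
`(z_γ)_{γ<θ}` has dense range in `ℓ²(θ)`, then there are vectors `y_{γ,m}` with
`‖y_{γ,m} - z_γ‖ ≤ 1/m` such that the projections `p_λ(y_{γ,m})`, for `γ < θ` and `m ∈ ℕ⁺`,
are linearly independent over `ℂ`. -/
theorem stmt6 (lam θ : Cardinal) (hlam : ℵ₀ ≤ lam) (hlt : lam < θ) (hreg : θ.IsRegular)
    (hpow : θ ≤ lam ^ ℵ₀)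
    (z : θ.ord.ToType → L2 θ) (hz : DenseRange z) :
    ∃ y : θ.ord.ToType → ℕ+ → L2 θ,
      (∀ γ (m : ℕ+), ‖y γ m - z γ‖ ≤ 1 / (m : ℝ)) ∧
      LinearIndependent ℂ
        (fun gm : θ.ord.ToType × ℕ+ => restrictBelow θ lam (y gm.1 gm.2)) := by
  classical
  classical
  set S := {ξ : θ.ord.ToType // coordBelow θ lam ξ} with hSdef
  have hordlt : lam.ord < θ.ord := Cardinal.ord_lt_ord.2 hlt
  have eS : S ≃ lam.ord.ToType := by
    refine Equiv.trans ?_ (Ordinal.ToType.mk (o := lam.ord)).toEquiv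
    refine ⟨fun ξ => ⟨((Ordinal.ToType.mk (o := θ.ord)).symm ξ.1 : Ordinal), ξ.2⟩,
            fun p => ⟨(Ordinal.ToType.mk (o := θ.ord)) ⟨(p : Ordinal), lt_trans p.2 hordlt⟩, ?_⟩, ?_, ?_⟩
    · show coordBelow θ lam _
      unfold coordBelow
      rw [OrderIso.symm_apply_apply]
      exact p.2
    · intro ξ
      ext
      simp
      exact OrderIso.apply_symm_apply _ _
    · intro p
      ext
      simp
  have hmkS : #S = lam := by
    rw [Cardinal.mk_congr eS, Cardinal.mk_ord_toType]
  have hSinf : Infinite S := by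
    rw [Cardinal.infinite_iff, hmkS]; exact hlam
  obtain ⟨ι⟩ : Nonempty (List S ↪ S) := ⟨(Cardinal.eq.1 (Cardinal.mk_list_eq_mk S)).some.toEmbedding⟩
  -- sequences
  set seq : (ℕ → S) → ℕ → List S := fun f n => List.ofFn (fun i : Fin n => f i) with hseq
  have seq_len : ∀ f n, (seq f n).length = n := fun f n => List.length_ofFn
  have he_inj : ∀ f : ℕ → S, Function.Injective (fun n => ((ι (seq f n)) : θ.ord.ToType)) := by
    intro f n m h
    have := ι.injective (Subtype.coe_injective h)
    have := congrArg List.length this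
    simpa [seq_len] using this
  -- the vectors
  set x : (ℕ → S) → θ.ord.ToType → ℂ :=
    fun f => Function.extend (fun n => ((ι (seq f n)) : θ.ord.ToType)) (fun n => ((2:ℂ)⁻¹)^n) 0 with hx
  have hx_mem : ∀ f, Memℓp (x f) 2 := by
    intro f
    apply memℓp_gen
    have hval : (fun ξ => ‖x f ξ‖ ^ (2 : ℝ≥0∞).toReal)
        = Function.extend (fun n => ((ι (seq f n)) : θ.ord.ToType)) (fun n => ((1/4:ℝ))^n) 0 := by
      funext ξ
      rw [hx]
      simp only [ENNReal.toReal_ofNat]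
      rw [Function.apply_extend (fun c : ℂ => ‖c‖ ^ (2:ℝ))]
      congr 1
      · funext n
        simp only [Function.comp_apply, norm_pow, norm_inv, Complex.norm_ofNat]
        rw [Real.rpow_two, ← pow_mul, mul_comm n 2, pow_mul]
        norm_num
      · funext ξ'
        simp [Real.zero_rpow]
    rw [hval]
    rw [summable_extend_zero (he_inj f)]
    exact summable_geometric_of_lt_one (by norm_num) (by norm_num)
  set X : (ℕ → S) → L2 θ := fun f => ⟨x f, hx_mem f⟩ with hX
  -- the restriction linear map
  set R : L2 θ →ₗ[ℂ] (S → ℂ) :=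
    { toFun := restrictBelow θ lam,
      map_add' := fun a b => by
        funext ξ
        simp [restrictBelow, lp.coeFn_add],
      map_smul' := fun c a => by
        funext ξ
        simp [restrictBelow, lp.coeFn_smul] } with hR
  have hXli : LinearIndependent ℂ (fun f => R (X f)) := by
    rw [linearIndependent_iff']
    intro s c hsum f hf
    set d : (ℕ → S) → ℕ := fun g => if h : f = g then 0 else Classical.choose (Function.ne_iff.1 h) with hd
    set n := (s.sup d) + 1 with hn
    have hdn : ∀ g ∈ s, g ≠ f → seq g n ≠ seq f n := by
      intro g hg hgf hEq
      have h1 : f ≠ g := hgf.symm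
      have hk : f (d g) ≠ g (d g) := by
        have : d g = Classical.choose (Function.ne_iff.1 h1) := by rw [hd]; exact dif_neg h1
        rw [this]
        exact Classical.choose_spec (Function.ne_iff.1 h1)
      have hklt : d g < n := Nat.lt_succ_of_le (Finset.le_sup hg)
      have := List.ofFn_injective hEq
      exact hk (congrFun this ⟨d g, hklt⟩).symm
    have hterm : ∀ g ∈ s, g ≠ f → (R (X g)) (ι (seq f n)) = 0 := by
      intro g hg hgf
      show x g ((ι (seq f n)) : θ.ord.ToType) = 0
      rw [hx]
      refine Function.extend_apply' _ _ _ ?_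
      rintro ⟨m, hm⟩
      have h2 : seq g m = seq f n := ι.injective (Subtype.coe_injective hm)
      have h3 : m = n := by simpa [seq_len] using congrArg List.length h2
      exact hdn g hg hgf (h3 ▸ h2)
    have hfterm : (R (X f)) (ι (seq f n)) = ((2:ℂ)⁻¹)^n := by
      show x f ((ι (seq f n)) : θ.ord.ToType) = _
      rw [hx]
      exact (he_inj f).extend_apply _ _ _
    have := congrFun hsum (ι (seq f n))
    rw [Finset.sum_apply] at this
    rw [Finset.sum_eq_single f (fun g hg hgf => by
        rw [Pi.smul_apply, hterm g hg hgf, smul_zero]) (fun h => absurd hf h)] at this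
    rw [Pi.smul_apply, hfterm] at this
    have h2 : ((2:ℂ)⁻¹)^n ≠ 0 := by norm_num
    simpa [smul_eq_mul, h2] using this
  -- cardinality of the index of X
  have hθ : ℵ₀ ≤ θ := hlam.trans hlt.le
  have hcardT : θ ≤ #(ℕ → S) := by
    have : #(ℕ → S) = lam ^ ℵ₀ := by
      rw [Cardinal.mk_arrow]
      simp [hmkS]
    rw [this]; exact hpow
  -- the key extension step
  have key : ∀ W : Submodule ℂ (S → ℂ), Module.rank ℂ W < θ →
      ∀ γ (m : ℕ+), ∃ y : L2 θ, ‖y - z γ‖ ≤ 1/(m:ℝ) ∧ R y ∉ W := by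
    intro W hW γ m
    have hf0 : ∃ f, R (X f) ∉ W := by
      by_contra hall
      push_neg at hall
      have hli : LinearIndependent ℂ (fun f => (⟨R (X f), hall f⟩ : W)) :=
        LinearIndependent.of_comp W.subtype hXli
      have := hli.cardinal_le_rank
      exact absurd (hcardT.trans this) (not_le.2 hW)
    obtain ⟨f, hf⟩ := hf0
    set a : ℝ := (m:ℝ)⁻¹ / (‖X f‖ + 1) with ha
    have hXpos : (0:ℝ) < ‖X f‖ + 1 := by positivity
    have hapos : 0 < a := by
      rw [ha]; positivity
    have hbound : ∀ b : ℝ, 0 ≤ b → b ≤ a → ‖(z γ + (b:ℂ) • X f) - z γ‖ ≤ 1/(m:ℝ) := by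
      intro b hb0 hba
      rw [add_sub_cancel_left, norm_smul]
      have h1 : ‖(b:ℂ)‖ = b := by rw [Complex.norm_real, Real.norm_of_nonneg hb0]
      rw [h1, one_div]
      calc b * ‖X f‖ ≤ a * (‖X f‖ + 1) := by
            apply mul_le_mul hba (by linarith) (norm_nonneg _) hapos.le
        _ = (m:ℝ)⁻¹ := by rw [ha, div_mul_cancel₀]; exact hXpos.ne'
    by_cases h1 : R (z γ + (a:ℂ) • X f) ∈ W
    · refine ⟨z γ + ((a/2 : ℝ):ℂ) • X f, hbound _ (by linarith) (by linarith), ?_⟩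
      intro h2
      have h3 : R ((z γ + (a:ℂ) • X f) - (z γ + ((a/2:ℝ):ℂ) • X f)) ∈ W := by
        rw [map_sub]; exact W.sub_mem h1 h2
      have h4 : (z γ + (a:ℂ) • X f) - (z γ + ((a/2:ℝ):ℂ) • X f) = (((a/2:ℝ)):ℂ) • X f := by
        rw [add_sub_add_left_eq_sub, ← sub_smul]
        norm_num
        ring_nf
      rw [h4, map_smul] at h3
      have h5 : ((a/2:ℝ):ℂ) ≠ 0 := by
        simp only [ne_eq, Complex.ofReal_eq_zero]
        linarith
      have h6 := W.smul_mem (((a/2:ℝ):ℂ))⁻¹ h3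
      rw [inv_smul_smul₀ h5] at h6
      exact hf h6
    · exact ⟨z γ + (a:ℂ) • X f, hbound _ hapos.le le_rfl, h1⟩
  -- well-order the index pairs
  have hcardI : #(θ.ord.ToType × ℕ+) = #(θ.ord.ToType) := by
    simp only [Cardinal.mk_prod, Cardinal.mk_ord_toType, Cardinal.mk_denumerable,
      Cardinal.lift_id, Cardinal.lift_aleph0]
    exact Cardinal.mul_aleph0_eq hθ
  set q := (Cardinal.eq.1 hcardI).some with hq
  set rlt : (θ.ord.ToType × ℕ+) → (θ.ord.ToType × ℕ+) → Prop := InvImage (· < ·) q with hrlt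
  have hwf : WellFounded rlt := InvImage.wf q IsWellFounded.wf
  have hrank : ∀ (i : θ.ord.ToType × ℕ+) (prev : ∀ j, rlt j i → L2 θ),
      Module.rank ℂ (span ℂ (Set.range fun j : {j // rlt j i} => R (prev j.1 j.2))) < θ := by
    intro i prev
    refine lt_of_le_of_lt ((rank_span_le _).trans Cardinal.mk_range_le) ?_
    have e1 : {j // rlt j i} ≃ Set.Iio (q i) := Equiv.subtypeEquiv q (fun j => Iff.rfl)
    rw [Cardinal.mk_congr e1]
    exact Cardinal.mk_Iio_ord_toType (q i)
  have H : ∀ (i : θ.ord.ToType × ℕ+) (prev : ∀ j, rlt j i → L2 θ),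
      ∃ y : L2 θ, ‖y - z i.1‖ ≤ 1/(i.2:ℝ) ∧
        R y ∉ span ℂ (Set.range fun j : {j // rlt j i} => R (prev j.1 j.2)) :=
    fun i prev => key _ (hrank i prev) i.1 i.2
  set v : (θ.ord.ToType × ℕ+) → L2 θ :=
    hwf.fix (fun i prev => Classical.choose (H i prev)) with hvdef
  have hveq : ∀ i, v i = Classical.choose (H i (fun j _ => v j)) := fun i => by
    rw [hvdef]; exact hwf.fix_eq _ i
  have hspec : ∀ i, ‖v i - z i.1‖ ≤ 1/(i.2:ℝ) ∧
      R (v i) ∉ span ℂ (Set.range fun j : {j // rlt j i} => R (v j.1)) := by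
    intro i
    rw [hveq i]
    exact Classical.choose_spec (H i (fun j _ => v j))
  have final : LinearIndependent ℂ
      (fun gm : θ.ord.ToType × ℕ+ => restrictBelow θ lam ((fun γ m => v (γ, m)) gm.1 gm.2)) := by
    show LinearIndependent ℂ fun gm : θ.ord.ToType × ℕ+ => R (v gm)
    apply li_aux q q.injective
    intro i
    rw [Set.image_eq_range]
    exact (hspec i).2
  exact ⟨fun γ m => v (γ, m), fun γ m => (hspec (γ, m)).1, final⟩
end
end

section
/- For every infinite cardinal λ, the Hamel dimension of ℓ²(λ) as a vector space over ℂ equals λ^ℵ₀; in particular every Hamel basis of ℓ²(λ) over ℂ has cardinality λ^ℵ₀. -/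
open Cardinal
open scoped ENNReal

noncomputable section

namespace Stmt7Aux

open Function ENNReal

variable {τ : Type}

/-- Encoding of the `n`-th prefix of `f` as an element of `τ`. -/
def enc (e : List τ ≃ τ) (f : ℕ → τ) (n : ℕ) : τ := e ((List.range n).map f)

lemma enc_inj (e : List τ ≃ τ) (f : ℕ → τ) : Injective (enc e f) := by
  intro m n h
  have h2 := e.injective h
  simpa using congrArg List.length h2

/-- The vector associated to `f`. -/
def vfun (e : List τ ≃ τ) (f : ℕ → τ) : τ → ℂ :=
  Function.extend (enc e f) (fun n => (2⁻¹ : ℂ) ^ (n + 1)) 0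

lemma vfun_enc (e : List τ ≃ τ) (f : ℕ → τ) (n : ℕ) :
    vfun e f (enc e f n) = (2⁻¹ : ℂ) ^ (n + 1) :=
  (enc_inj e f).extend_apply _ _ _

lemma vfun_of_not_mem (e : List τ ≃ τ) (f : ℕ → τ) {x : τ}
    (hx : ¬∃ n, enc e f n = x) : vfun e f x = 0 :=
  Function.extend_apply' _ _ _ hx

lemma memℓp_vfun (e : List τ ≃ τ) (f : ℕ → τ) : Memℓp (vfun e f) (2 : ℝ≥0∞) := by
  apply memℓp_gen
  have key : (fun x => ‖vfun e f x‖ ^ (2 : ℝ≥0∞).toReal)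
      = Function.extend (enc e f) (fun n => ((4 : ℝ)⁻¹) ^ (n + 1)) 0 := by
    funext x
    by_cases hx : ∃ n, enc e f n = x
    · obtain ⟨n, rfl⟩ := hx
      rw [vfun_enc, (enc_inj e f).extend_apply]
      have h2 : (2 : ℝ≥0∞).toReal = ((2 : ℕ) : ℝ) := by norm_num
      rw [h2, Real.rpow_natCast]
      rw [norm_pow]
      norm_num
      ring_nf
      rw [pow_mul]
      norm_num
      rw [← pow_mul, mul_comm n 2, pow_mul]
      norm_num
    · rw [vfun_of_not_mem e f hx, Function.extend_apply' _ _ _ hx]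
      simp [Real.zero_rpow (by norm_num : (2 : ℝ≥0∞).toReal ≠ 0)]
  rw [key, summable_extend_zero (enc_inj e f)]
  have : Summable (fun n : ℕ => ((4 : ℝ)⁻¹) ^ n) :=
    summable_geometric_of_lt_one (by norm_num) (by norm_num)
  simpa [pow_succ, mul_comm] using this.mul_right (4 : ℝ)⁻¹


lemma enc_eq_enc {e : List τ ≃ τ} {f g : ℕ → τ} {k n : ℕ} (h : enc e f k = enc e g n) :
    k = n ∧ ∀ j < n, f j = g j := by
  have hl := e.injective h
  have hk : k = n := by simpa using congrArg List.length hl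
  subst hk
  refine ⟨rfl, fun j hj => ?_⟩
  have := congrArg (fun l => l[j]?) hl
  simpa [List.getElem?_map, List.getElem?_range hj] using this

lemma linInd (e : List τ ≃ τ) :
    LinearIndependent ℂ (fun f : ℕ → τ =>
      (⟨vfun e f, memℓp_vfun e f⟩ : lp (fun _ : τ => ℂ) 2)) := by
  classical
  rw [linearIndependent_iff']
  intro s c hsum f₀ hf₀
  set m : (ℕ → τ) → ℕ := fun f => if h : ∃ j, f j ≠ f₀ j then Nat.find h else 0 with hm
  set n : ℕ := s.sup m + 1 with hn
  set x₀ : τ := enc e f₀ n with hx₀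
  have hcoe : (∑ f ∈ s, c f * vfun e f x₀) = 0 := by
    have h1 : (⇑(∑ f ∈ s, c f • (⟨vfun e f, memℓp_vfun e f⟩ : lp (fun _ : τ => ℂ) 2))) x₀
        = 0 := by
      rw [hsum, lp.coeFn_zero]; rfl
    rw [lp.coeFn_sum] at h1
    simpa [lp.coeFn_smul] using h1
  have hzero : ∀ f ∈ s, f ≠ f₀ → c f * vfun e f x₀ = 0 := by
    intro f hf hne
    have hex : ∃ j, f j ≠ f₀ j := Function.ne_iff.mp hne
    have hnotmem : ¬∃ k, enc e f k = x₀ := by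
      rintro ⟨k, hk⟩
      obtain ⟨hkn, hagree⟩ := enc_eq_enc hk
      have hlt : m f < n := by
        have : m f ≤ s.sup m := Finset.le_sup hf
        omega
      have := hagree (m f) hlt
      rw [hm] at this
      simp only [dif_pos hex] at this
      exact Nat.find_spec hex this
    rw [vfun_of_not_mem e f hnotmem, mul_zero]
  have hmain : c f₀ * vfun e f₀ x₀ = 0 := by
    rw [← hcoe]
    exact (Finset.sum_eq_single_of_mem f₀ hf₀ fun f hf hne => hzero f hf hne).symm
  rw [hx₀, vfun_enc] at hmain
  have : ((2 : ℂ)⁻¹) ^ (n + 1) ≠ 0 :=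
    pow_ne_zero _ (inv_ne_zero two_ne_zero)
  exact (mul_eq_zero.mp hmain).resolve_right this

end Stmt7Aux

/-- for every infinite cardinal `λ`, the Hamel dimension of `ℓ²(λ)` over `ℂ`
is `λ^ℵ₀`; in particular every Hamel basis of `ℓ²(λ)` over `ℂ` has cardinality `λ^ℵ₀`. -/
theorem stmt7 (lam : Cardinal) (hlam : ℵ₀ ≤ lam) :
    Module.rank ℂ (L2 lam) = lam ^ ℵ₀ ∧
      ∀ (ι : Type) (_ : Module.Basis ι ℂ (L2 lam)), #ι = lam ^ ℵ₀ := by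
  classical
  have hmk : #lam.ord.ToType = lam := mk_ord_toType lam
  have hinf : Infinite lam.ord.ToType := by
    rw [Cardinal.infinite_iff, hmk]; exact hlam
  have hrank : Module.rank ℂ (L2 lam) = lam ^ ℵ₀ := by
    apply le_antisymm
    · -- upper bound
      refine le_trans (rank_le_card _ _) ?_
      have x₀ : lam.ord.ToType := Classical.arbitrary _
      have hs : ∀ f : L2 lam, ∃ E : ℕ → lam.ord.ToType,
          Function.support ⇑f ∪ {x₀} = Set.range E := by
        intro f
        have hsum : Summable fun i => ‖f i‖ ^ (2 : ℝ≥0∞).toReal :=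
          (lp.memℓp f).summable (by norm_num)
        have hc : (Function.support fun i => ‖f i‖ ^ (2 : ℝ≥0∞).toReal).Countable :=
          hsum.countable_support
        have hsupp : (Function.support ⇑f).Countable := by
          refine Set.Countable.mono ?_ hc
          intro i hi
          simp only [Function.mem_support] at hi ⊢
          intro h0
          apply hi
          rwa [Real.rpow_eq_zero (norm_nonneg _) (by norm_num), norm_eq_zero] at h0
        exact ((hsupp.union (Set.countable_singleton x₀)).exists_eq_range
          ⟨x₀, Or.inr rfl⟩)
      choose E hE using hs
      set F : L2 lam → (ℕ → lam.ord.ToType × ℂ) := fun f n => (E f n, f (E f n)) with hF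
      have hFinj : Function.Injective F := by
        intro f g h
        have hE' : E f = E g := funext fun n => congrArg Prod.fst (congrFun h n)
        apply lp.ext
        funext x
        by_cases hx : x ∈ Set.range (E f)
        · obtain ⟨n, rfl⟩ := hx
          have h2 := congrArg Prod.snd (congrFun h n)
          simpa [hF, hE'] using h2
        · have hxf : f x = 0 := by
            by_contra h0
            exact hx ((hE f) ▸ Or.inl h0)
          have hxg : g x = 0 := by
            by_contra h0
            exact hx (hE' ▸ (hE g) ▸ Or.inl h0)
          rw [hxf, hxg]
      calc #(L2 lam) ≤ #(ℕ → lam.ord.ToType × ℂ) := mk_le_of_injective hFinj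
        _ = #(lam.ord.ToType × ℂ) ^ ℵ₀ := by rw [← power_def, mk_nat]
        _ = (lam * (2 ^ ℵ₀)) ^ ℵ₀ := by
            rw [mk_prod, lift_id, lift_id, hmk, mk_complex, two_power_aleph0]
        _ = lam ^ ℵ₀ * (2 ^ ℵ₀) ^ ℵ₀ := by rw [mul_power]
        _ = lam ^ ℵ₀ * 2 ^ (ℵ₀ * ℵ₀) := by rw [← power_mul]
        _ = lam ^ ℵ₀ * 2 ^ ℵ₀ := by rw [aleph0_mul_aleph0]
        _ ≤ lam ^ ℵ₀ * lam ^ ℵ₀ := by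
            have h2lam : (2 : Cardinal) ≤ lam :=
              le_trans (by exact_mod_cast (nat_lt_aleph0 2).le) hlam
            exact mul_le_mul_right (power_le_power_right h2lam) _
        _ = lam ^ (ℵ₀ + ℵ₀) := (power_add _ _ _).symm
        _ = lam ^ ℵ₀ := by rw [aleph0_add_aleph0]
    · -- lower bound
      obtain ⟨e⟩ := Cardinal.eq.mp (mk_list_eq_mk lam.ord.ToType)
      have hli := (Stmt7Aux.linInd e).cardinal_le_rank
      calc lam ^ ℵ₀ = #lam.ord.ToType ^ #ℕ := by rw [hmk, mk_nat]
        _ = #(ℕ → lam.ord.ToType) := power_def _ _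
        _ ≤ Module.rank ℂ (L2 lam) := hli
  exact ⟨hrank, fun ι b => by rw [b.mk_eq_rank'', hrank]⟩
end
end

section
/- Every complex Hilbert space H that is not separable contains a dense linear subspace K that contains no orthonormal basis of H; that is, there is no orthonormal subset S of K whose closed linear span equals H. -/
open Cardinal Submodule

noncomputable section

local notation "⟪" x ", " y "⟫" => @inner ℂ _ _ x y

universe u

/-- countable support of inner products against an orthonormal family -/
lemma aux_countable_inner {H : Type u} [NormedAddCommGroup H] [InnerProductSpace ℂ H]
    {ι : Type*} {v : ι → H} (hv : Orthonormal ℂ v) (x : H) :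
    {i | ⟪v i, x⟫ ≠ 0}.Countable := by
  have hs : Summable fun i => ‖⟪v i, x⟫‖ ^ 2 := hv.inner_products_summable x
  refine hs.countable_support.mono ?_
  intro i hi
  simp only [Set.mem_setOf_eq, ne_eq] at hi
  simp only [Function.mem_support, ne_eq]
  intro h
  exact hi (by simpa using pow_eq_zero_iff (n := 2) (by norm_num) |>.mp (by simpa using h) |> norm_eq_zero.mp)

lemma aux_floor_sep {r r' : ℝ} (h : r ≠ r') :
    ∃ N : ℕ, ∀ n, N ≤ n → ⌊(2:ℝ)^n * r⌋ ≠ ⌊(2:ℝ)^n * r'⌋ := by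
  wlog hlt : r < r' generalizing r r'
  · obtain ⟨N, hN⟩ := this h.symm (lt_of_le_of_ne (not_lt.mp hlt) h.symm)
    exact ⟨N, fun n hn => (hN n hn).symm⟩
  obtain ⟨N, hN⟩ := pow_unbounded_of_one_lt ((r' - r)⁻¹) (one_lt_two (α := ℝ))
  refine ⟨N, fun n hn => ?_⟩
  have h2 : (2:ℝ)^N ≤ 2^n := pow_le_pow_right₀ one_le_two hn
  have hr : 0 < r' - r := sub_pos.mpr hlt
  have h1 : 1 ≤ (2:ℝ)^n * (r' - r) := by
    have := hN.trans_le h2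
    rw [inv_lt_iff_one_lt_mul₀ hr] at this
    linarith [this]
  have hle : (2:ℝ)^n * r + 1 ≤ 2^n * r' := by nlinarith
  have : ⌊(2:ℝ)^n * r⌋ + 1 ≤ ⌊(2:ℝ)^n * r'⌋ := by
    calc ⌊(2:ℝ)^n * r⌋ + 1 = ⌊(2:ℝ)^n * r + 1⌋ := by rw [Int.floor_add_one]
    _ ≤ ⌊(2:ℝ)^n * r'⌋ := Int.floor_le_floor hle
  omega

lemma aux_uncountable_subfamily {α : Type u} {s : Set α} (hs : ¬ s.Countable) :
    ∃ (ι : Type u) (g : ι → α) (τ : ι → ℝ),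
      ¬ Countable ι ∧ Function.Injective g ∧ (∀ i, g i ∈ s) ∧ Function.Injective τ := by
  have h1 : ℵ₀ < #↥s := by
    rw [Cardinal.aleph0_lt_mk_iff, ← not_countable_iff, Set.countable_coe_iff]
    exact hs
  have h2 : Order.succ (ℵ₀ : Cardinal.{u}) ≤ #↥s := Order.succ_le_of_lt h1
  set ι := (Order.succ (ℵ₀ : Cardinal.{u})).out with hι
  have hout : #ι = Order.succ (ℵ₀ : Cardinal.{u}) := Cardinal.mk_out _
  obtain ⟨g⟩ : Nonempty (ι ↪ ↥s) := by
    rw [← Cardinal.le_def, hout]; exact h2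
  obtain ⟨τ⟩ : Nonempty (ι ↪ ULift.{u} ℝ) := by
    rw [← Cardinal.le_def, hout, Cardinal.mk_uLift, Cardinal.mk_real, Cardinal.lift_continuum]
    exact Order.succ_le_of_lt Cardinal.aleph0_lt_continuum
  refine ⟨ι, fun i => (g i : α), fun i => (τ i).down, ?_, ?_, fun i => (g i).2, ?_⟩
  · intro hc
    have : #ι ≤ ℵ₀ := Cardinal.mk_le_aleph0_iff.mpr hc
    rw [hout] at this
    exact absurd (this.trans_lt (Order.lt_succ (ℵ₀ : Cardinal.{u}))).false (by simp)
  · exact Subtype.coe_injective.comp g.injective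
  · intro a b hab
    exact τ.injective (ULift.down_injective hab)


/-- every non-separable complex Hilbert space `H` contains a dense linear
subspace `K` containing no orthonormal basis of `H`: there is no orthonormal subset `S ⊆ K`
whose closed linear span is all of `H`. -/
theorem stmt9 {H : Type*} [NormedAddCommGroup H] [InnerProductSpace ℂ H] [CompleteSpace H]
    (hns : ¬ TopologicalSpace.SeparableSpace H) :
    ∃ K : Submodule ℂ H, Dense (K : Set H) ∧
      ¬ ∃ S : Set H, S ⊆ (K : Set H) ∧ Orthonormal ℂ (fun s : S => (s : H)) ∧
        (Submodule.span ℂ S).topologicalClosure = ⊤ := by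
  classical
  obtain ⟨w, b, hb⟩ := exists_hilbertBasis ℂ H
  have hwo : Orthonormal ℂ ((↑) : w → H) := by rw [← hb]; exact b.orthonormal
  have hdense : (span ℂ w).topologicalClosure = ⊤ := by
    have := b.dense_span; rwa [hb, Subtype.range_coe] at this
  have hw_norm : ∀ x ∈ w, ‖x‖ = 1 := fun x hx => hwo.1 ⟨x, hx⟩
  have hw_orth : ∀ x ∈ w, ∀ y ∈ w, x ≠ y → ⟪x, y⟫ = 0 := by
    intro x hx y hy hxy
    exact hwo.2 (i := ⟨x, hx⟩) (j := ⟨y, hy⟩) (by simpa [Subtype.ext_iff] using hxy)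
  -- w is uncountable
  have hwc : ¬ w.Countable := by
    intro hc
    apply hns
    have h1 : TopologicalSpace.IsSeparable (span ℂ w : Set H) := hc.isSeparable.span
    have h2 := h1.closure
    rw [← Submodule.topologicalClosure_coe, hdense, Submodule.top_coe] at h2
    exact TopologicalSpace.isSeparable_univ_iff.mp h2
  have hwi : w.Infinite := fun hfin => hwc hfin.countable
  haveI : Infinite ↥w := hwi.to_subtype
  -- countable orthonormal subfamily fe
  let femb : ℕ × ℤ ↪ ↥w := (Denumerable.eqv (ℕ × ℤ)).toEmbedding.trans (Infinite.natEmbedding ↥w)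
  set fe : ℕ × ℤ → H := fun p => (femb p : H) with hfe_def
  have hfe_inj : Function.Injective fe := fun p q h =>
    femb.injective (Subtype.coe_injective h)
  have hfe_w : ∀ p, fe p ∈ w := fun p => (femb p).2
  have hfe_on : Orthonormal ℂ fe := hwo.comp _ femb.injective
  have hfe_ite : ∀ p q, ⟪fe p, fe q⟫ = if p = q then 1 else 0 := fun p q =>
    orthonormal_iff_ite.mp hfe_on p q
  -- uncountable subfamily ge with real tags
  have hwc2 : ¬ (w \ Set.range fe).Countable := by
    intro hc
    apply hwc
    have hsub : w ⊆ (w \ Set.range fe) ∪ Set.range fe := by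
      intro x hx
      by_cases h : x ∈ Set.range fe
      · exact Or.inr h
      · exact Or.inl ⟨hx, h⟩
    exact ((hc.union (Set.countable_range fe)).mono hsub)
  obtain ⟨ι, ge, τ, hι, hge_inj, hge_mem, hτ⟩ := aux_uncountable_subfamily hwc2
  have hge_w : ∀ i, ge i ∈ w := fun i => (hge_mem i).1
  have hge_nf : ∀ i, ge i ∉ Set.range fe := fun i => (hge_mem i).2
  have hge_on : Orthonormal ℂ ge := by
    have : Orthonormal ℂ (((↑) : w → H) ∘ (fun i => (⟨ge i, hge_w i⟩ : ↥w))) :=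
      hwo.comp _ (fun a b hab => hge_inj (by simpa [Subtype.ext_iff] using hab))
    exact this
  have hge_ite : ∀ i j, ⟪ge i, ge j⟫ = if i = j then 1 else 0 := fun i j =>
    orthonormal_iff_ite.mp hge_on i j
  -- the perturbation vectors
  set coef : ℕ → ℂ := fun n => (1/2 : ℂ)^n with hcoef_def
  have hcoef_ne : ∀ n, coef n ≠ 0 := fun n => pow_ne_zero _ (by norm_num)
  set widx : ι → ℕ → ℕ × ℤ := fun i n => (n, ⌊(2:ℝ)^n * τ i⌋) with hwidx_def
  set term : ι → ℕ → H := fun i n => coef n • fe (widx i n) with hterm_def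
  have hsumm : ∀ i, Summable (term i) := by
    intro i
    apply Summable.of_norm
    have he : (fun n => ‖term i n‖) = fun n => (1/2:ℝ)^n := by
      funext n
      rw [hterm_def]
      simp only [norm_smul, hcoef_def]
      rw [hw_norm _ (hfe_w _)]
      simp [norm_pow]
    rw [he]
    exact summable_geometric_of_lt_one (by norm_num) (by norm_num)
  set wv : ι → H := fun i => ∑' n, term i n with hwv_def
  have hwv_hs : ∀ i, HasSum (term i) (wv i) := fun i => (hsumm i).hasSum
  have hinner_wv : ∀ (x : H) (i : ι),
      HasSum (fun n => coef n * ⟪x, fe (widx i n)⟫) ⟪x, wv i⟫ := by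
    intro x i
    have h := (hwv_hs i).mapL (innerSL ℂ x)
    convert h using 2 with n
    all_goals first | rfl | simp [hterm_def, inner_smul_right, innerSL_apply_apply]
  -- inner products with wv
  have hwv_zero : ∀ (x : H), x ∈ w → ∀ i, (∀ n, x ≠ fe (widx i n)) → ⟪x, wv i⟫ = 0 := by
    intro x hx i hne
    have h0 : HasSum (fun n => coef n * ⟪x, fe (widx i n)⟫) 0 := by
      have : (fun n => coef n * ⟪x, fe (widx i n)⟫) = fun _ => 0 := by
        funext n
        rw [hw_orth x hx _ (hfe_w _) (hne n), mul_zero]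
      rw [this]
      exact hasSum_zero
    exact (hinner_wv x i).unique h0
  have hwv_fe : ∀ (p : ℕ × ℤ) (i : ι),
      ⟪fe p, wv i⟫ = if p = widx i p.1 then coef p.1 else 0 := by
    intro p i
    have h := hinner_wv (fe p) i
    rw [← h.tsum_eq, tsum_eq_single p.1]
    · rw [hfe_ite]
      by_cases hpe : p = widx i p.1
      · rw [if_pos hpe, if_pos hpe, mul_one]
      · rw [if_neg hpe, if_neg hpe, mul_zero]
    · intro n hn
      rw [hfe_ite, if_neg, mul_zero]
      intro hcon
      exact hn (by rw [hcon])
  have hwv_fe' : ∀ (i : ι) (n : ℕ), ⟪fe (widx i n), wv i⟫ = coef n := by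
    intro i n
    rw [hwv_fe]
    simp [hwidx_def]
  -- ge i + wv i is not in w, and the family is injective
  have hgw_ninj : ∀ (i : ι) (y : H), y ∈ w → y ≠ ge i + wv i := by
    intro i y hy hcon
    have h0 : ⟪fe (widx i 0), y⟫ = 1 := by
      rw [hcon, inner_add_right]
      rw [hw_orth _ (hfe_w _) _ (hge_w i) (by
        intro hcc
        exact hge_nf i ⟨widx i 0, hcc⟩), hwv_fe' i 0]
      simp [hcoef_def]
    have h1 : ⟪fe (widx i 1), y⟫ = coef 1 := by
      rw [hcon, inner_add_right]
      rw [hw_orth _ (hfe_w _) _ (hge_w i) (by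
        intro hcc
        exact hge_nf i ⟨widx i 1, hcc⟩), hwv_fe' i 1]
      simp
    -- y ∈ w equals both fe (widx i 0) and fe (widx i 1)?
    have hy0 : y = fe (widx i 0) := by
      by_contra hne
      rw [hw_orth _ (hfe_w _) _ hy (Ne.symm hne)] at h0
      exact one_ne_zero h0.symm
    have hy1 : y = fe (widx i 1) := by
      by_contra hne
      rw [hw_orth _ (hfe_w _) _ hy (Ne.symm hne)] at h1
      exact hcoef_ne 1 h1.symm
    rw [hy0] at hy1
    have := hfe_inj hy1
    simp [hwidx_def] at this
  -- the submodule
  set G : Set H := (w \ Set.range ge) ∪ Set.range (fun i => ge i + wv i) with hG_def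
  set K : Submodule ℂ H := span ℂ G with hK_def
  have hfeG : ∀ p, fe p ∈ G := by
    intro p
    refine Or.inl ⟨hfe_w p, ?_⟩
    rintro ⟨i, hi⟩
    exact hge_nf i ⟨p, hi.symm⟩
  refine ⟨K, ?_, ?_⟩
  · -- density
    have hKc : ∀ x ∈ w, x ∈ K.topologicalClosure := by
      intro x hx
      by_cases hxg : x ∈ Set.range ge
      · obtain ⟨i, rfl⟩ := hxg
        have hwvK : wv i ∈ K.topologicalClosure := by
          have hmem : wv i ∈ closure (K : Set H) := by
            refine mem_closure_of_tendsto (hwv_hs i) (Filter.Eventually.of_forall fun s => ?_)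
            simp only [SetLike.mem_coe]
            refine sum_mem fun n _ => ?_
            exact smul_mem _ _ (subset_span (hfeG _))
          rwa [← Submodule.topologicalClosure_coe, SetLike.mem_coe] at hmem
        have hgiK : ge i + wv i ∈ K.topologicalClosure :=
          K.le_topologicalClosure (subset_span (Or.inr ⟨i, rfl⟩))
        simpa using sub_mem hgiK hwvK
      · exact K.le_topologicalClosure (subset_span (Or.inl ⟨hx, hxg⟩))
    have hle : (span ℂ w).topologicalClosure ≤ K.topologicalClosure :=
      Submodule.topologicalClosure_minimal _ (span_le.mpr hKc) K.isClosed_topologicalClosure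
    rw [Submodule.dense_iff_topologicalClosure_eq_top]
    rw [hdense] at hle
    exact top_le_iff.mp hle
  · -- no orthonormal basis inside K
    rintro ⟨S, hSK, hSo, hSsp⟩
    -- injectivity of the perturbed family
    have hgw_inj : ∀ i1 i2 : ι, ge i1 + wv i1 = ge i2 + wv i2 → i1 = i2 := by
      intro i1 i2 h12
      by_contra hne12
      have e1 : ⟪ge i1, ge i1 + wv i1⟫ = 1 := by
        rw [inner_add_right, hge_ite, if_pos rfl,
          hwv_zero _ (hge_w i1) i1 (fun n hc => hge_nf i1 ⟨widx i1 n, hc.symm⟩), add_zero]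
      have e2 : ⟪ge i1, ge i2 + wv i2⟫ = 0 := by
        rw [inner_add_right, hge_ite, if_neg hne12,
          hwv_zero _ (hge_w i1) i2 (fun n hc => hge_nf i1 ⟨widx i2 n, hc.symm⟩), add_zero]
      rw [h12, e2] at e1
      exact one_ne_zero e1.symm
    -- core lemma
    have hcore : ∀ x ∈ K, (∀ p, ⟪fe p, x⟫ = 0) → ∀ i, ⟪ge i, x⟫ = 0 := by
      intro x hxK hfex i
      by_contra hne
      obtain ⟨m, a, gj, hrep⟩ := mem_span_set'.mp hxK
      set NB : Fin m → ℕ := fun j =>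
        if h1 : ∃ q, (gj j : H) = fe q then (Classical.choose h1).1 + 1
        else if h2 : ∃ i', i' ≠ i ∧ (gj j : H) = ge i' + wv i' then
          Classical.choose (aux_floor_sep (r := τ (Classical.choose h2)) (r' := τ i)
            (fun hc => (Classical.choose_spec h2).1 (hτ hc)))
        else 0 with hNB_def
      set nn : ℕ := Finset.univ.sup NB with hnn_def
      have hNBle : ∀ j, NB j ≤ nn := fun j => Finset.le_sup (Finset.mem_univ j)
      have key : ∀ j : Fin m, ⟪fe (widx i nn), (gj j : H)⟫ = coef nn * ⟪ge i, (gj j : H)⟫ := by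
        intro j
        have hG : (gj j : H) ∈ G := (gj j).2
        rcases hG with ⟨hwj, hnr⟩ | ⟨i', hi'⟩
        · -- an unperturbed basis vector
          have hR : ⟪ge i, (gj j : H)⟫ = 0 :=
            hw_orth _ (hge_w i) _ hwj (fun hc => hnr ⟨i, hc⟩)
          rw [hR, mul_zero]
          by_cases hf : ∃ q, (gj j : H) = fe q
          · have hq := Classical.choose_spec hf
            have hlt : (Classical.choose hf).1 < nn := by
              have := hNBle j
              rw [hNB_def] at this
              simp only [dif_pos hf] at this
              omega
            rw [hq, hfe_ite, if_neg]
            intro hcon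
            have : nn = (Classical.choose hf).1 := congrArg Prod.fst hcon
            omega
          · exact hw_orth _ (hfe_w _) _ hwj (fun hc => hf ⟨widx i nn, hc.symm⟩)
        · -- a perturbed vector
          rw [← hi']
          have hnofe : ¬ ∃ q, ((fun i => ge i + wv i) i' : H) = fe q := by
            rintro ⟨q, hq⟩
            exact hgw_ninj i' (fe q) (hfe_w q) hq.symm
          have hL0 : ⟪fe (widx i nn), ge i'⟫ = 0 :=
            hw_orth _ (hfe_w _) _ (hge_w i') (fun hc => hge_nf i' ⟨widx i nn, hc⟩)
          have hR0 : ⟪ge i, wv i'⟫ = 0 :=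
            hwv_zero _ (hge_w i) i' (fun n hc => hge_nf i ⟨widx i' n, hc.symm⟩)
          simp only [inner_add_right, hL0, hR0, add_zero, zero_add]
          rw [hwv_fe, hge_ite]
          by_cases hii : i' = i
          · subst hii
            rw [if_pos rfl, if_pos rfl, mul_one]
          · rw [if_neg (show ¬ i = i' from fun h => hii h.symm), mul_zero, if_neg]
            intro hcon
            -- hcon : widx i nn = widx i' (widx i nn).1
            have hfl : ⌊(2:ℝ)^nn * τ i⌋ = ⌊(2:ℝ)^nn * τ i'⌋ := by
              have := congrArg Prod.snd hcon
              simpa [hwidx_def] using this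
            have hex : ∃ i'', i'' ≠ i ∧ ((fun i => ge i + wv i) i' : H) = ge i'' + wv i'' :=
              ⟨i', hii, rfl⟩
            have hch : Classical.choose hex = i' := by
              have hsp := (Classical.choose_spec hex).2
              exact hgw_inj _ _ hsp.symm
            have hbd := hNBle j
            rw [hNB_def] at hbd
            have hjj' : (gj j : H) = ((fun i => ge i + wv i) i' : H) := hi'.symm
            have hex' : ∃ i'', i'' ≠ i ∧ (gj j : H) = ge i'' + wv i'' := by
              rw [hjj']; exact hex
            have hnofe' : ¬ ∃ q, (gj j : H) = fe q := by rw [hjj']; exact hnofe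
            simp only [dif_neg hnofe', dif_pos hex'] at hbd
            have hsep := Classical.choose_spec (aux_floor_sep (r := τ (Classical.choose hex')) (r' := τ i)
              (fun hc => (Classical.choose_spec hex').1 (hτ hc)))
            have hch' : Classical.choose hex' = i' := by
              have hsp := (Classical.choose_spec hex').2
              exact hgw_inj _ _ (hsp.symm.trans hi'.symm)
            have := hsep nn hbd
            rw [hch'] at this
            exact this hfl.symm
      have hL : ⟪fe (widx i nn), x⟫ = coef nn * ⟪ge i, x⟫ := by
        rw [← hrep, inner_sum, inner_sum, Finset.mul_sum]
        refine Finset.sum_congr rfl fun j _ => ?_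
        rw [inner_smul_right, inner_smul_right, key j]
        ring
      rw [hfex (widx i nn)] at hL
      rcases mul_eq_zero.mp hL.symm with h | h
      · exact hcoef_ne nn h
      · exact hne h
    -- countable set of "bad" elements of S
    have hTc : (⋃ p : ℕ × ℤ, {s : ↥S | ⟪fe p, (s : H)⟫ ≠ 0}).Countable := by
      refine Set.countable_iUnion fun p => ?_
      refine (aux_countable_inner hSo (fe p)).mono fun s hs => ?_
      simp only [Set.mem_setOf_eq] at hs ⊢
      intro hc
      exact hs (inner_eq_zero_symm.mp hc)
    set T : Set ↥S := ⋃ p : ℕ × ℤ, {s : ↥S | ⟪fe p, (s : H)⟫ ≠ 0} with hT_def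
    have horth : ∀ s : ↥S, s ∉ T → ∀ i, ⟪ge i, (s : H)⟫ = 0 := by
      intro s hs i
      refine hcore _ (hSK s.2) (fun p => ?_) i
      by_contra hc
      exact hs (Set.mem_iUnion.mpr ⟨p, hc⟩)
    have hBad : (⋃ s ∈ T, {i : ι | ⟪ge i, (s : H)⟫ ≠ 0}).Countable := by
      refine Set.Countable.biUnion hTc fun s _ => ?_
      exact aux_countable_inner hge_on (s : H)
    obtain ⟨i0, hi0⟩ : ∃ i : ι, i ∉ ⋃ s ∈ T, {i : ι | ⟪ge i, (s : H)⟫ ≠ 0} := by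
      by_contra hc
      push_neg at hc
      apply hι
      rw [← Set.countable_univ_iff]
      exact hBad.mono fun i _ => hc i
    have hall : ∀ s ∈ S, ⟪ge i0, s⟫ = 0 := by
      intro s hs
      by_cases hsT : (⟨s, hs⟩ : ↥S) ∈ T
      · by_contra hne
        exact hi0 (Set.mem_biUnion hsT hne)
      · exact horth ⟨s, hs⟩ hsT i0
    have h1 : span ℂ S ≤ LinearMap.ker (innerSL ℂ (ge i0) : H →ₗ[ℂ] ℂ) := by
      rw [span_le]
      intro s hs
      simp only [SetLike.mem_coe, LinearMap.mem_ker, ContinuousLinearMap.coe_coe, innerSL_apply_apply]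
      exact hall s hs
    have h2 := Submodule.topologicalClosure_minimal _ h1 (ContinuousLinearMap.isClosed_ker _)
    rw [hSsp] at h2
    have h3 : ge i0 ∈ LinearMap.ker (innerSL ℂ (ge i0) : H →ₗ[ℂ] ℂ) := h2 Submodule.mem_top
    simp only [LinearMap.mem_ker, ContinuousLinearMap.coe_coe, innerSL_apply_apply] at h3
    have h4 : ⟪ge i0, ge i0⟫ = 1 := by rw [hge_ite, if_pos rfl]
    rw [h3] at h4
    exact one_ne_zero h4.symm
end
end

section
/- Let θ be an uncountable cardinal with θ ≤ 2^ℵ₀. Then there exists a dense linear subspace K of ℓ²(θ) such that the restriction to K of the projection p_{ℵ₀} onto the first ℵ₀ coordinates is injective; consequently K contains no uncountable orthonormal family, and in particular no orthonormal basis of ℓ²(θ). -/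
open Cardinal

noncomputable section

set_option maxHeartbeats 1000000 in
/-- if `θ` is uncountable and `θ ≤ 2^ℵ₀`, then there is a dense linear subspace
`K` of `ℓ²(θ)` on which the projection onto the first `ℵ₀` coordinates is injective;
consequently `K` contains no uncountable orthonormal family, and in particular no orthonormal
basis of `ℓ²(θ)`. -/
theorem stmt10 (θ : Cardinal) (h1 : ℵ₀ < θ) (h2 : θ ≤ 2 ^ ℵ₀) :
    ∃ K : Submodule ℂ (L2 θ), Dense (K : Set (L2 θ)) ∧
      (∀ x ∈ K, (∀ ξ : θ.ord.ToType, coordBelow θ ℵ₀ ξ → x ξ = 0) → x = 0) ∧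
      (∀ (ι : Type) (v : ι → L2 θ), Orthonormal ℂ v → (∀ i, v i ∈ K) → #ι ≤ ℵ₀) ∧
      ¬ ∃ S : Set (L2 θ), S ⊆ (K : Set (L2 θ)) ∧
          Orthonormal ℂ (fun s : S => (s : L2 θ)) ∧
          (Submodule.span ℂ S).topologicalClosure = ⊤ := by
  classical
  set I := θ.ord.ToType with hI
  have hmkI : #I = θ := by rw [hI, Cardinal.mk_toType, Cardinal.card_ord]
  -- the enumeration of the first ω coordinates
  have hnlt : ∀ n : ℕ, (n : Ordinal) < θ.ord := by
    intro n
    refine lt_trans (Ordinal.nat_lt_omega0 n) ?_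
    rw [← Cardinal.ord_aleph0]
    exact Cardinal.ord_lt_ord.mpr h1
  set b : ℕ → I := fun n => (Ordinal.ToType.mk (o := θ.ord)) ⟨(n : Ordinal), hnlt n⟩ with hbdef
  have hb_inj : Function.Injective b := by
    intro m n h
    have h2 : ((m : Ordinal)) = (n : Ordinal) :=
      congrArg Subtype.val ((Ordinal.ToType.mk (o := θ.ord)).injective h)
    exact_mod_cast h2
  have hlowb : ∀ n, coordBelow θ ℵ₀ (b n) := by
    intro n
    unfold coordBelow
    rw [hbdef]
    simp only [OrderIso.symm_apply_apply]
    rw [Cardinal.ord_aleph0]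
    exact Ordinal.nat_lt_omega0 n
  have hlow_iff : ∀ ξ : I, coordBelow θ ℵ₀ ξ ↔ ∃ n, b n = ξ := by
    intro ξ
    unfold coordBelow
    rw [Cardinal.ord_aleph0, Ordinal.lt_omega0]
    constructor
    · rintro ⟨n, hn⟩
      refine ⟨n, ?_⟩
      have : (Ordinal.ToType.mk (o := θ.ord)).symm ξ = ⟨(n : Ordinal), hnlt n⟩ := Subtype.ext hn
      rw [hbdef]
      simp only [← this, OrderIso.apply_symm_apply]
    · rintro ⟨n, rfl⟩
      refine ⟨n, ?_⟩
      rw [hbdef]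
      simp only [OrderIso.symm_apply_apply]
  -- an injective family of reals in (0, 1/2)
  have hemb : Nonempty (I ↪ (Set.Ioo (0:ℝ) 2⁻¹)) := by
    rw [← Cardinal.le_def, hmkI, Cardinal.mk_Ioo_real (by norm_num)]
    rwa [← Cardinal.two_power_aleph0]
  obtain ⟨emb⟩ := hemb
  set t : I → ℝ := fun ξ => (emb ξ : ℝ) with htdef
  have ht0 : ∀ ξ, 0 < t ξ := fun ξ => (emb ξ).2.1
  have ht2 : ∀ ξ, t ξ < 2⁻¹ := fun ξ => (emb ξ).2.2
  have ht_inj : Function.Injective t := fun a b h => emb.injective (Subtype.ext h)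
  -- basis vectors and the perturbation vectors
  set e : I → L2 θ := fun ξ => lp.single 2 ξ (1:ℂ) with hedef
  have he_apply : ∀ ξ j : I, e ξ j = if j = ξ then 1 else 0 := by
    intro ξ j
    simp only [hedef]
    simp only [lp.single_apply]
    by_cases h : j = ξ
    · subst h; simp
    · simp [h]
  set g : I → I → ℂ := fun ξ => Function.extend b (fun n => ((t ξ : ℂ)) ^ (n+1)) 0 with hgdef
  have hg_b : ∀ ξ n, g ξ (b n) = (t ξ : ℂ) ^ (n+1) := by
    intro ξ n
    simp only [hgdef]
    exact hb_inj.extend_apply _ _ _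
  have hg_nb : ∀ ξ i, ¬(∃ n, b n = i) → g ξ i = 0 := by
    intro ξ i hi
    simp only [hgdef]
    exact Function.extend_apply' _ _ _ hi
  have hgmem : ∀ ξ, Memℓp (g ξ) 2 := by
    intro ξ
    apply memℓp_gen
    have h2r : (2 : ENNReal).toReal = (2:ℝ) := by norm_num
    simp only [h2r]
    have hvan : ∀ i ∉ Set.range b, ‖g ξ i‖ ^ (2:ℝ) = 0 := by
      intro i hi
      rw [hg_nb ξ i (by simpa [Set.range] using hi), norm_zero,
        Real.zero_rpow (by norm_num)]
    rw [← Function.Injective.summable_iff hb_inj hvan]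
    have key : ∀ n : ℕ, ‖g ξ (b n)‖ ^ (2:ℝ) = (t ξ ^ 2) ^ (n+1) := by
      intro n
      rw [hg_b, norm_pow, Complex.norm_real, Real.norm_eq_abs, abs_of_pos (ht0 ξ)]
      rw [show (2:ℝ) = ((2:ℕ):ℝ) by norm_num, Real.rpow_natCast]
      ring
    have hlt : t ξ ^ 2 < 1 := by nlinarith [ht0 ξ, ht2 ξ]
    have h0 : 0 ≤ t ξ ^ 2 := sq_nonneg _
    refine ((summable_geometric_of_lt_one h0 hlt).mul_left (t ξ ^ 2)).congr ?_
    intro n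
    simp only [Function.comp_apply]
    rw [key n]
    ring
  set y : I → L2 θ := fun ξ => ⟨g ξ, hgmem ξ⟩ with hydef
  have hy_b : ∀ ξ n, y ξ (b n) = (t ξ : ℂ) ^ (n+1) := by
    intro ξ n
    simp only [hydef]
    exact hg_b ξ n
  have hy_nb : ∀ ξ i, ¬(∃ n, b n = i) → y ξ i = 0 := by
    intro ξ i h
    simp only [hydef]
    exact hg_nb ξ i h
  -- the spanning family
  set w : I → L2 θ := fun ξ => if coordBelow θ ℵ₀ ξ then e ξ else e ξ + y ξ with hwdef
  set K : Submodule ℂ (L2 θ) := Submodule.span ℂ (Set.range w) with hKdef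
  -- evaluation of finite combinations
  have hx_eval : ∀ (c : I →₀ ℂ) (i : I),
      ((c.sum fun ξ a => a • w ξ) : L2 θ) i = ∑ ξ ∈ c.support, c ξ * (w ξ i) := by
    intro c i
    rw [Finsupp.sum, lp.coeFn_sum, Finset.sum_apply]
    exact Finset.sum_congr rfl fun ξ _ => by rw [lp.coeFn_smul]; rfl
  -- STEP: injectivity of the projection on K
  have hinj : ∀ x ∈ K, (∀ ξ : I, coordBelow θ ℵ₀ ξ → x ξ = 0) → x = 0 := by
    intro x hx hlowzero
    obtain ⟨c, rfl⟩ := Finsupp.mem_span_range_iff_exists_finsupp.mp hx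
    set s : Finset I := c.support.filter (fun ζ => ¬ coordBelow θ ℵ₀ ζ) with hsdef
    -- value at non-low coordinates
    have hw_high : ∀ ζ ξ : I, ¬ coordBelow θ ℵ₀ ξ → w ζ ξ = if ξ = ζ then 1 else 0 := by
      intro ζ ξ hξ
      have hyz : y ζ ξ = 0 := hy_nb ζ ξ (fun h => hξ ((hlow_iff ξ).mpr h))
      simp only [hwdef]
      by_cases h : coordBelow θ ℵ₀ ζ
      · rw [if_pos h, he_apply]
      · rw [if_neg h]
        have : (e ζ + y ζ) ξ = e ζ ξ + y ζ ξ := by rw [lp.coeFn_add]; rfl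
        rw [this, hyz, add_zero, he_apply]
    have hA : ∀ ξ : I, ¬ coordBelow θ ℵ₀ ξ →
        ((c.sum fun ζ a => a • w ζ) : L2 θ) ξ = c ξ := by
      intro ξ hξ
      rw [hx_eval]
      rw [Finset.sum_congr rfl (fun ζ _ => by rw [hw_high ζ ξ hξ])]
      simp only [mul_ite, mul_one, mul_zero]
      rw [Finset.sum_ite_eq c.support ξ (fun ζ => c ζ)]
      by_cases h : ξ ∈ c.support
      · rw [if_pos h]
      · rw [if_neg h]
        exact (Finsupp.notMem_support_iff.mp h).symm
    -- value at low coordinates b n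
    have hB : ∀ n : ℕ, ((c.sum fun ζ a => a • w ζ) : L2 θ) (b n)
        = c (b n) + ∑ ζ ∈ s, c ζ * (t ζ : ℂ) ^ (n+1) := by
      intro n
      rw [hx_eval]
      rw [← Finset.sum_filter_add_sum_filter_not c.support (fun ζ => coordBelow θ ℵ₀ ζ)]
      congr 1
      · -- low part
        have : ∀ ζ ∈ c.support.filter (fun ζ => coordBelow θ ℵ₀ ζ),
            c ζ * w ζ (b n) = if b n = ζ then c ζ else 0 := by
          intro ζ hζ
          have hζlow := (Finset.mem_filter.mp hζ).2
          simp only [hwdef]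
          simp only [if_pos hζlow]
          rw [he_apply]
          by_cases h : b n = ζ <;> simp [h]
        rw [Finset.sum_congr rfl this, Finset.sum_ite_eq _ (b n) (fun ζ => c ζ)]
        by_cases h : b n ∈ c.support.filter (fun ζ => coordBelow θ ℵ₀ ζ)
        · rw [if_pos h]
        · rw [if_neg h]
          have : b n ∉ c.support := by
            intro hmem
            exact h (Finset.mem_filter.mpr ⟨hmem, hlowb n⟩)
          exact (Finsupp.notMem_support_iff.mp this).symm
      · -- high part
        refine Finset.sum_congr rfl ?_
        intro ζ hζ
        have hζhigh := (Finset.mem_filter.mp hζ).2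
        have hne : b n ≠ ζ := fun h => hζhigh (h ▸ hlowb n)
        simp only [hwdef]
        simp only [if_neg hζhigh]
        have : (e ζ + y ζ) (b n) = e ζ (b n) + y ζ (b n) := by rw [lp.coeFn_add]; rfl
        rw [this, he_apply, if_neg hne, zero_add, hy_b]
    have hzero : ∀ n : ℕ, c (b n) + ∑ ζ ∈ s, c ζ * (t ζ : ℂ) ^ (n+1) = 0 := by
      intro n
      rw [← hB n]
      exact hlowzero _ (hlowb n)
    -- large N beyond the support
    obtain ⟨N, hN⟩ : ∃ N : ℕ, ∀ n ≥ N, c (b n) = 0 := by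
      refine ⟨(c.support.preimage b hb_inj.injOn).sup id + 1, ?_⟩
      intro n hn
      by_contra h
      have hmem : n ∈ c.support.preimage b hb_inj.injOn := by
        rw [Finset.mem_preimage]
        exact Finsupp.mem_support_iff.mpr (fun hc => h (by rw [hc]))
      have hle := Finset.le_sup (f := id) hmem
      simp only [id] at hle
      omega
    have hsum0 : ∀ n ≥ N, ∑ ζ ∈ s, c ζ * (t ζ : ℂ) ^ (n+1) = 0 := by
      intro n hn
      have := hzero n
      rw [hN n hn, zero_add] at this
      exact this
    -- Vandermonde argument: all high coefficients vanish
    have hcs : ∀ ζ ∈ s, c ζ = 0 := by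
      intro ζ hζ
      set k := s.card with hk
      set σ : Fin k ≃ s := s.equivFin.symm with hσ
      set f : Fin k → ℂ := fun j => ((t (σ j : I) : ℝ) : ℂ) with hfdef
      set v : Fin k → ℂ := fun j => c (σ j : I) * f j ^ (N+1) with hvdef
      have hf_inj : Function.Injective f := by
        intro a b hab
        simp only [hfdef, Complex.ofReal_inj] at hab
        exact σ.injective (Subtype.ext (ht_inj hab))
      have hf_ne : ∀ j, f j ≠ 0 := by
        intro j
        simp only [hfdef, ne_eq, Complex.ofReal_eq_zero]
        exact (ht0 _).ne'
      have hv0 : v = 0 := by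
        apply Matrix.eq_zero_of_forall_pow_sum_mul_pow_eq_zero hf_inj
        intro i
        have hkey := hsum0 (N + i) (Nat.le_add_right N i)
        have hre : ∑ j : Fin k, v j * f j ^ (i : ℕ)
            = ∑ ζ ∈ s, c ζ * (t ζ : ℂ) ^ (N + (i:ℕ) + 1) := by
          rw [← Finset.sum_coe_sort s (fun ζ => c ζ * (t ζ : ℂ) ^ (N + (i:ℕ) + 1))]
          rw [← Equiv.sum_comp σ (fun z => c (z : I) * (t (z : I) : ℂ) ^ (N + (i:ℕ) + 1))]
          refine Finset.sum_congr rfl ?_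
          intro j _
          simp only [hvdef, hfdef]
          ring
        rw [hre]
        exact hkey
      have : v (σ.symm ⟨ζ, hζ⟩) = 0 := by rw [hv0]; rfl
      rw [hvdef] at this
      simp only [Equiv.apply_symm_apply] at this
      rcases mul_eq_zero.mp this with h | h
      · exact h
      · exact absurd h (pow_ne_zero _ (hf_ne _))
    -- conclude
    apply lp.ext
    funext i
    by_cases hlow : coordBelow θ ℵ₀ i
    · simpa using hlowzero i hlow
    · have h1' := hA i hlow
      have hci : c i = 0 := by
        by_cases hmem : i ∈ c.support
        · exact hcs i (Finset.mem_filter.mpr ⟨hmem, hlow⟩)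
        · exact Finsupp.notMem_support_iff.mp hmem
      simpa [hci] using h1'
  -- STEP: density
  set M := K.topologicalClosure with hMdef
  have hMclosed : IsClosed (M : Set (L2 θ)) := K.isClosed_topologicalClosure
  have hsingle_smul : ∀ (i : I) (a : ℂ), lp.single 2 i a = a • e i := by
    intro i a
    simp only [hedef]
    rw [show a = a • (1:ℂ) by simp, lp.single_smul]
    simp
  have hhasSum_mem : ∀ x : L2 θ, (∀ i : I, lp.single 2 i (x i) ∈ M) → x ∈ M := by
    intro x hxm
    have hsum : HasSum (fun i : I => lp.single 2 i (x i)) x :=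
      lp.hasSum_single (by norm_num) x
    exact hMclosed.mem_of_tendsto hsum
      (Filter.Eventually.of_forall fun st => M.sum_mem fun i _ => hxm i)
  have heb_mem : ∀ n, e (b n) ∈ K := by
    intro n
    have : w (b n) = e (b n) := by simp only [hwdef]; exact if_pos (hlowb n)
    rw [← this]
    exact Submodule.subset_span ⟨b n, rfl⟩
  have hy_mem : ∀ ξ, y ξ ∈ M := by
    intro ξ
    apply hhasSum_mem
    intro i
    by_cases h : ∃ n, b n = i
    · obtain ⟨n, rfl⟩ := h
      rw [hsingle_smul]
      exact M.smul_mem _ (K.le_topologicalClosure (heb_mem n))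
    · rw [hy_nb ξ i h, hsingle_smul, zero_smul]
      exact M.zero_mem
  have he_mem : ∀ ξ, e ξ ∈ M := by
    intro ξ
    by_cases h : coordBelow θ ℵ₀ ξ
    · have : w ξ = e ξ := by simp only [hwdef]; exact if_pos h
      rw [← this]
      exact K.le_topologicalClosure (Submodule.subset_span ⟨ξ, rfl⟩)
    · have hw : w ξ = e ξ + y ξ := by simp only [hwdef]; exact if_neg h
      have : e ξ = w ξ - y ξ := by rw [hw]; abel
      rw [this]
      exact M.sub_mem (K.le_topologicalClosure (Submodule.subset_span ⟨ξ, rfl⟩)) (hy_mem ξ)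
  have hMtop : M = ⊤ := by
    rw [eq_top_iff]
    intro x _
    apply hhasSum_mem
    intro i
    rw [hsingle_smul]
    exact M.smul_mem _ (he_mem i)
  have hdense : Dense (K : Set (L2 θ)) :=
    Submodule.dense_iff_topologicalClosure_eq_top.mpr hMtop
  -- STEP: no uncountable orthonormal family in K
  have hcount : ∀ (ι : Type) (v : ι → L2 θ), Orthonormal ℂ v → (∀ i, v i ∈ K) → #ι ≤ ℵ₀ := by
    intro ι v hv hvK
    have hcov : ∀ i : ι, ∃ n : ℕ, v i (b n) ≠ 0 := by
      intro i
      by_contra h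
      push_neg at h
      have hz : v i = 0 := by
        apply hinj _ (hvK i)
        intro ξ hξ
        obtain ⟨n, rfl⟩ := (hlow_iff ξ).mp hξ
        exact h n
      exact hv.ne_zero i hz
    have hctble : ∀ n : ℕ, {i : ι | v i (b n) ≠ 0}.Countable := by
      intro n
      have hsumm : Summable fun i : ι => ‖(inner ℂ (v i) (e (b n)) : ℂ)‖ ^ 2 :=
        hv.inner_products_summable _
      refine hsumm.countable_support.mono ?_
      intro i hi
      simp only [Function.mem_support]
      have : (inner ℂ (v i) (e (b n)) : ℂ) = (starRingEnd ℂ) (v i (b n)) := by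
        rw [hedef, lp.inner_single_right]
        simp [RCLike.inner_apply]
      rw [this]
      simp only [ne_eq, Set.mem_setOf_eq] at hi
      have hnz : ‖(starRingEnd ℂ) (v i (b n))‖ ≠ 0 := by
        simp only [norm_ne_zero_iff, ne_eq, map_eq_zero]
        exact hi
      exact pow_ne_zero _ hnz
    have huniv : (Set.univ : Set ι).Countable := by
      refine (Set.countable_iUnion hctble).mono ?_
      intro i _
      obtain ⟨n, hn⟩ := hcov i
      exact Set.mem_iUnion.mpr ⟨n, hn⟩
    rw [Cardinal.mk_le_aleph0_iff]
    exact Set.countable_univ_iff.mp huniv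
  refine ⟨K, hdense, hinj, hcount, ?_⟩
  -- STEP: no orthonormal basis inside K
  rintro ⟨S, hSK, hSorth, hStop⟩
  have hScount : Countable S :=
    Cardinal.mk_le_aleph0_iff.mp (hcount S (fun s => (s : L2 θ)) hSorth (fun s => hSK s.2))
  have hs_supp : ∀ s : S, {ξ : I | (s : L2 θ) ξ ≠ 0}.Countable := by
    intro s
    have hmem : Memℓp ((s : L2 θ) : ∀ _ : I, ℂ) 2 := lp.memℓp _
    have hsm : Summable fun ξ : I => ‖(s : L2 θ) ξ‖ ^ (2 : ENNReal).toReal :=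
      (memℓp_gen_iff (by norm_num)).mp hmem
    refine hsm.countable_support.mono ?_
    intro ξ hξ
    simp only [ne_eq, Set.mem_setOf_eq] at hξ
    simp only [Function.mem_support]
    exact ne_of_gt (Real.rpow_pos_of_pos (norm_pos_iff.mpr hξ) _)
  have hexists : ∀ ξ : I, ∃ s : S, (s : L2 θ) ξ ≠ 0 := by
    intro ξ
    by_contra h
    push_neg at h
    have hker : Submodule.span ℂ S ≤ LinearMap.ker (innerSL ℂ (e ξ) : L2 θ →ₗ[ℂ] ℂ) := by
      rw [Submodule.span_le]
      intro u hu
      simp only [SetLike.mem_coe, LinearMap.mem_ker]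
      have : (innerSL ℂ (e ξ) : L2 θ →ₗ[ℂ] ℂ) u = (inner ℂ (e ξ) u : ℂ) := rfl
      rw [this, hedef, lp.inner_single_left]
      have := h ⟨u, hu⟩
      simp only [RCLike.inner_apply, map_one, one_mul]
      rw [mul_one]
      exact this
    have hcl := Submodule.topologicalClosure_minimal _ hker
      (ContinuousLinearMap.isClosed_ker _)
    rw [hStop] at hcl
    have hmem : e ξ ∈ LinearMap.ker (innerSL ℂ (e ξ) : L2 θ →ₗ[ℂ] ℂ) := hcl Submodule.mem_top
    rw [LinearMap.mem_ker] at hmem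
    have : (inner ℂ (e ξ) (e ξ) : ℂ) = 0 := hmem
    rw [hedef, lp.inner_single_left] at this
    rw [← hedef] at this
    rw [he_apply ξ ξ] at this
    simp at this
  have huniv : (Set.univ : Set I).Countable := by
    refine (Set.countable_iUnion hs_supp).mono ?_
    intro ξ _
    obtain ⟨s, hs⟩ := hexists ξ
    exact Set.mem_iUnion.mpr ⟨s, hs⟩
  have : #I ≤ ℵ₀ := Cardinal.mk_le_aleph0_iff.mpr (Set.countable_univ_iff.mp huniv)
  rw [hmkI] at this
  exact absurd this (not_le.mpr h1)
end
end

section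
/- Let θ be an infinite cardinal, let H₀ be an infinite-dimensional separable closed subspace of ℓ²(2^ℵ₀) with orthogonal projection p₀, and let K be a dense linear subspace of ℓ²(2^ℵ₀) such that ker(p₀) ∩ K = {0}. Then the dense linear subspace K × ℓ²(θ) of the Hilbert space H = ℓ²(2^ℵ₀) × ℓ²(θ) contains no orthonormal basis of H; that is, there is no orthonormal subset of K × ℓ²(θ) whose closed linear span is all of H. -/
open Cardinal

noncomputable section

/-- The orthogonal direct sum `ℓ²(2^ℵ₀) ⊕ ℓ²(θ)`, i.e. the product with the `L²` norm. -/
abbrev Hprod (θ : Cardinal) : Type := WithLp 2 (L2 (2 ^ ℵ₀) × L2 θ)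

/-- The subspace `K × ℓ²(θ)` of `ℓ²(2^ℵ₀) ⊕ ℓ²(θ)`. -/
def prodSub (θ : Cardinal) (K : Submodule ℂ (L2 (2 ^ ℵ₀))) : Submodule ℂ (Hprod θ) :=
  (K.prod (⊤ : Submodule ℂ (L2 θ))).comap (WithLp.linearEquiv 2 ℂ (L2 (2 ^ ℵ₀) × L2 θ)).toLinearMap

/-- An orthonormal family in a separable inner product space has countable index type. -/
lemma countable_of_orthonormal_aux {ι E : Type*} [NormedAddCommGroup E]
    [InnerProductSpace ℂ E] [TopologicalSpace.SeparableSpace E]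
    {v : ι → E} (hv : Orthonormal ℂ v) : Countable ι := by
  obtain ⟨D, Dcnt, Ddense⟩ := TopologicalSpace.exists_countable_dense E
  have key : ∀ i : ι, ∃ d, d ∈ D ∧ dist (v i) d < 1/2 := by
    intro i
    obtain ⟨d, hd1, hd2⟩ := Metric.dense_iff.1 Ddense (v i) (1/2) (by norm_num)
    exact ⟨d, hd2, by simpa [dist_comm] using hd1⟩
  choose f hfD hf using key
  have hdist : ∀ i j : ι, i ≠ j → (1 : ℝ) ≤ dist (v i) (v j) := by
    intro i j hne
    have h1 : ‖v i - v j‖ ^ 2 = 2 := by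
      rw [@norm_sub_sq ℂ, hv.1 i, hv.1 j, hv.2 hne]
      norm_num
    rw [dist_eq_norm]
    nlinarith [norm_nonneg (v i - v j)]
  have hinj : Function.Injective f := by
    intro i j hij
    by_contra hne
    have h2 : dist (v i) (v j) < 1 := by
      calc dist (v i) (v j) ≤ dist (v i) (f i) + dist (f j) (v j) := by
            rw [← hij]; exact dist_triangle _ _ _
        _ < 1/2 + 1/2 := add_lt_add (hf i) (by rw [dist_comm]; exact hf j)
        _ = 1 := by norm_num
    exact absurd (hdist i j hne) (not_le.2 h2)
  have : Countable D := Dcnt.to_subtype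
  exact Function.Injective.countable (f := fun i => (⟨f i, hfD i⟩ : D))
    fun i j h => hinj (congrArg Subtype.val h)

/-- `ℓ²(2^ℵ₀)` is not separable. -/
lemma L2_continuum_not_separable :
    ¬ TopologicalSpace.SeparableSpace (L2 (2 ^ ℵ₀)) := by
  intro hsep
  classical
  set ι := (2 ^ ℵ₀ : Cardinal).ord.ToType
  have hon : Orthonormal ℂ (fun i : ι => lp.single 2 i (1 : ℂ)) := by
    rw [orthonormal_iff_ite]
    intro i j
    rw [lp.inner_single_left]
    by_cases h : i = j <;> simp [lp.single_apply, h]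
  have : Countable ι := countable_of_orthonormal_aux hon
  have h1 : #ι ≤ ℵ₀ := Cardinal.mk_le_aleph0
  rw [Cardinal.mk_ord_toType] at h1
  exact absurd h1 (not_le.2 (Cardinal.cantor ℵ₀))

set_option maxHeartbeats 1000000 in
/-- let `θ` be an infinite cardinal, `H₀` an infinite-dimensional separable
closed subspace of `ℓ²(2^ℵ₀)` with orthogonal projection `p₀`, and `K` a dense linear
subspace of `ℓ²(2^ℵ₀)` with `ker p₀ ∩ K = {0}`. Then the dense subspace `K × ℓ²(θ)` of
`H = ℓ²(2^ℵ₀) ⊕ ℓ²(θ)` contains no orthonormal basis of `H`. -/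
theorem stmt11 (θ : Cardinal) (hθ : ℵ₀ ≤ θ)
    (H₀ : Submodule ℂ (L2 (2 ^ ℵ₀))) (hcl : IsClosed (H₀ : Set (L2 (2 ^ ℵ₀))))
    [CompleteSpace H₀] [TopologicalSpace.SeparableSpace H₀]
    (hinfdim : ¬ FiniteDimensional ℂ H₀)
    (K : Submodule ℂ (L2 (2 ^ ℵ₀))) (hK : Dense (K : Set (L2 (2 ^ ℵ₀))))
    (hker : ∀ x ∈ K, H₀.orthogonalProjectionOnto x = 0 → x = 0) :
    Dense ((prodSub θ K : Submodule ℂ (Hprod θ)) : Set (Hprod θ)) ∧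
      ¬ ∃ S : Set (Hprod θ), S ⊆ (prodSub θ K : Set (Hprod θ)) ∧
          Orthonormal ℂ (fun s : S => (s : Hprod θ)) ∧
          (Submodule.span ℂ S).topologicalClosure = ⊤ := by
  classical
  constructor
  · -- density
    have he : (prodSub θ K : Set (Hprod θ)) =
        (WithLp.prodContinuousLinearEquiv 2 ℂ (L2 (2 ^ ℵ₀)) (L2 θ)) ⁻¹'
          ((K : Set (L2 (2 ^ ℵ₀))) ×ˢ (Set.univ : Set (L2 θ))) := rfl
    rw [he]
    exact (hK.prod dense_univ).preimage
      (WithLp.prodContinuousLinearEquiv 2 ℂ (L2 (2 ^ ℵ₀)) (L2 θ)).toHomeomorph.isOpenMap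
  · rintro ⟨S, hSsub, hon, hspan⟩
    obtain ⟨D, Dcnt, Ddense⟩ := TopologicalSpace.exists_countable_dense H₀
    -- the embedding of the first factor
    set vD : L2 (2 ^ ℵ₀) → Hprod θ :=
      fun x => (WithLp.equiv 2 (L2 (2 ^ ℵ₀) × L2 θ)).symm (x, 0) with hvD
    have hinner : ∀ (x : L2 (2 ^ ℵ₀)) (s : Hprod θ),
        (inner (𝕜 := ℂ) s (vD x)) = inner (𝕜 := ℂ)
          ((WithLp.equiv 2 (L2 (2 ^ ℵ₀) × L2 θ) s).1) x := by
      intro x s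
      rw [WithLp.prod_inner_apply]
      simp [hvD]
      change inner ℂ (WithLp.fst s) x + inner ℂ (WithLp.snd s) (0 : L2 θ) = inner ℂ (WithLp.fst s) x
      simp
    -- countably many members of S are non-orthogonal to any given vector
    have hcntT : ∀ x : Hprod θ,
        (Subtype.val '' {s : S | inner (𝕜 := ℂ) (s : Hprod θ) x ≠ 0}).Countable := by
      intro x
      apply Set.Countable.image
      have hsum := hon.inner_products_summable (x := x)
      have := hsum.countable_support
      convert this using 1
      ext s
      simp [Function.support, sq_abs, norm_eq_zero]
    set S₀ : Set (Hprod θ) :=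
      ⋃ d ∈ D, Subtype.val '' {s : S | inner (𝕜 := ℂ) (s : Hprod θ) (vD (d : L2 (2 ^ ℵ₀))) ≠ 0}
      with hS₀
    have hS₀cnt : S₀.Countable := Set.Countable.biUnion Dcnt fun d _ => hcntT _
    -- members of S outside S₀ have zero first coordinate
    have hzero : ∀ s ∈ S, s ∉ S₀ →
        (WithLp.equiv 2 (L2 (2 ^ ℵ₀) × L2 θ) s).1 = 0 := by
      intro s hsS hs0
      set xs := (WithLp.equiv 2 (L2 (2 ^ ℵ₀) × L2 θ) s).1 with hxs
      have hD0 : ∀ d ∈ D, inner (𝕜 := ℂ) ((d : H₀) : L2 (2 ^ ℵ₀)) xs = 0 := by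
        intro d hd
        have : inner (𝕜 := ℂ) (s : Hprod θ) (vD ((d : H₀) : L2 (2 ^ ℵ₀))) = 0 := by
          by_contra hne
          exact hs0 (Set.mem_biUnion hd ⟨⟨s, hsS⟩, hne, rfl⟩)
        rw [hinner] at this
        rw [← hxs] at this
        exact inner_eq_zero_symm.mp this
      have hcont : Continuous fun h : H₀ => inner (𝕜 := ℂ) (h : L2 (2 ^ ℵ₀)) xs :=
        Continuous.inner continuous_subtype_val continuous_const
      have hall : ∀ h : H₀, inner (𝕜 := ℂ) ((h : H₀) : L2 (2 ^ ℵ₀)) xs = 0 := by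
        have := Continuous.ext_on Ddense hcont continuous_const
          (fun d hd => hD0 d hd)
        intro h; exact congrFun this h
      have hmem : xs ∈ H₀ᗮ := by
        rw [Submodule.mem_orthogonal]
        intro u hu
        exact hall ⟨u, hu⟩
      have hproj : H₀.orthogonalProjectionOnto xs = 0 :=
        Submodule.orthogonalProjectionOnto_eq_zero_iff.2 hmem
      have hxsK : xs ∈ K := (hSsub hsS).1
      exact hker xs hxsK hproj
    -- the separable closed subspace catching everything
    set C : Set (L2 (2 ^ ℵ₀)) :=
      (fun x : Hprod θ => (WithLp.equiv 2 (L2 (2 ^ ℵ₀) × L2 θ) x).1) '' S₀ with hC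
    have hCcnt : C.Countable := hS₀cnt.image _
    set M : Submodule ℂ (L2 (2 ^ ℵ₀)) := (Submodule.span ℂ C).topologicalClosure with hM
    set N : Submodule ℂ (Hprod θ) :=
      (M.prod (⊤ : Submodule ℂ (L2 θ))).comap
        (WithLp.linearEquiv 2 ℂ (L2 (2 ^ ℵ₀) × L2 θ)).toLinearMap with hN
    have hSN : S ⊆ (N : Set (Hprod θ)) := by
      intro s hs
      refine ⟨?_, trivial⟩
      by_cases h0 : s ∈ S₀
      · exact (Submodule.span ℂ C).le_topologicalClosure
          (Submodule.subset_span ⟨s, h0, rfl⟩)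
      · show ((WithLp.equiv 2 (L2 (2 ^ ℵ₀) × L2 θ)) s).1 ∈ M
        rw [hzero s hs h0]; exact M.zero_mem
    have hNclosed : IsClosed (N : Set (Hprod θ)) := by
      have : (N : Set (Hprod θ)) =
          (WithLp.prodContinuousLinearEquiv 2 ℂ (L2 (2 ^ ℵ₀)) (L2 θ)) ⁻¹'
            ((M : Set (L2 (2 ^ ℵ₀))) ×ˢ (Set.univ : Set (L2 θ))) := rfl
      rw [this]
      exact ((Submodule.span ℂ C).isClosed_topologicalClosure.prod isClosed_univ).preimage
        (WithLp.prodContinuousLinearEquiv 2 ℂ (L2 (2 ^ ℵ₀)) (L2 θ)).continuous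
    have hNtop : N = ⊤ := by
      have hle : (Submodule.span ℂ S).topologicalClosure ≤ N :=
        Submodule.topologicalClosure_minimal _ (Submodule.span_le.2 hSN) hNclosed
      exact top_unique (hspan ▸ hle)
    have hMtop : ∀ x : L2 (2 ^ ℵ₀), x ∈ M := by
      intro x
      have : (WithLp.equiv 2 (L2 (2 ^ ℵ₀) × L2 θ)).symm (x, 0) ∈ N := by
        rw [hNtop]; trivial
      exact this.1
    -- hence ℓ²(2^ℵ₀) is separable
    have hsep : TopologicalSpace.SeparableSpace (L2 (2 ^ ℵ₀)) := by
      rw [← TopologicalSpace.isSeparable_univ_iff]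
      have h1 : TopologicalSpace.IsSeparable ((Submodule.span ℂ C : Submodule ℂ _) :
          Set (L2 (2 ^ ℵ₀))) := hCcnt.isSeparable.span
      have h2 : TopologicalSpace.IsSeparable (M : Set (L2 (2 ^ ℵ₀))) := by
        rw [hM, Submodule.topologicalClosure_coe]
        exact h1.closure
      have h3 : (M : Set (L2 (2 ^ ℵ₀))) = Set.univ :=
        Set.eq_univ_of_forall hMtop
      rwa [h3] at h2
    exact L2_continuum_not_separable hsep
end
end

section
/- Let θ be an uncountable regular cardinal such that λ^ℵ₀ < θ for every cardinal λ < θ. Then every linear subspace Y of any complex Hilbert space with cardinality #Y = θ contains an orthonormal family of cardinality θ. -/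
open Cardinal

noncomputable section

/-- if `θ` is an uncountable regular cardinal with `λ^ℵ₀ < θ` for every
`λ < θ`, then every linear subspace `Y` of any complex Hilbert space with `#Y = θ` contains
an orthonormal family of cardinality `θ`. -/
theorem stmt12 (θ : Cardinal) (hreg : θ.IsRegular) (hunc : ℵ₀ < θ)
    (hpow : ∀ lam < θ, lam ^ ℵ₀ < θ)
    {H : Type} [NormedAddCommGroup H] [InnerProductSpace ℂ H] [CompleteSpace H]
    (Y : Submodule ℂ H) (hY : #Y = θ) :
    ∃ S : Set H, S ⊆ (Y : Set H) ∧ Orthonormal ℂ (fun s : S => (s : H)) ∧ #S = θ := by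
  classical
  have hcont : #ℂ < θ := by
    rw [mk_complex, ← Cardinal.two_power_aleph0]
    calc (2 : Cardinal) ^ ℵ₀ ≤ ℵ₀ ^ ℵ₀ :=
          Cardinal.power_le_power_right (by simpa using (Cardinal.nat_lt_aleph0 2).le)
      _ < θ := hpow ℵ₀ hunc
  set P : Set (Set H) := {S | S ⊆ (Y : Set H) ∧ (∀ v ∈ S, ‖v‖ = 1) ∧
    (∀ u ∈ S, ∀ v ∈ S, u ≠ v → (inner ℂ u v : ℂ) = 0)} with hPdef
  obtain ⟨S, hSmax⟩ := zorn_subset P (by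
    intro c hcP hchain
    refine ⟨⋃₀ c, ⟨?_, ?_, ?_⟩, fun s hs => Set.subset_sUnion_of_mem hs⟩
    · intro x hx
      obtain ⟨s, hs, hxs⟩ := hx
      exact (hcP hs).1 hxs
    · intro v hv
      obtain ⟨s, hs, hvs⟩ := hv
      exact (hcP hs).2.1 v hvs
    · intro u hu v hv huv
      obtain ⟨s, hs, hus⟩ := hu
      obtain ⟨t, ht, hvt⟩ := hv
      rcases hchain.total hs ht with h | h
      · exact (hcP ht).2.2 u (h hus) v hvt huv
      · exact (hcP hs).2.2 u hus v (h hvt) huv)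
  have hS : S ∈ P := hSmax.prop
  refine ⟨S, hS.1, ⟨fun i => hS.2.1 i i.2, ?_⟩, ?_⟩
  · intro i j hij
    exact hS.2.2 i i.2 j j.2 (fun h => hij (Subtype.coe_injective h))
  -- cardinality
  have hSle : #S ≤ θ := hY ▸ Cardinal.mk_le_mk_of_subset hS.1
  refine le_antisymm hSle (not_lt.1 fun hlt : #S < θ => ?_)
  -- span has cardinality < θ
  have hspan : #(Submodule.span ℂ S) < θ := by
    rcases isEmpty_or_nonempty S with hemp | hne
    · haveI : Subsingleton (↥(Submodule.span ℂ S)) := by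
        rw [Set.isEmpty_coe_sort.1 hemp, Submodule.span_empty]
        infer_instance
      exact lt_of_le_of_lt (Cardinal.le_one_iff_subsingleton.2 inferInstance)
        (lt_of_le_of_lt Cardinal.one_le_aleph0 hunc)
    · have hsur : #(Submodule.span ℂ S) ≤ #(S →₀ ℂ) := by
        rw [Finsupp.span_eq_range_linearCombination ℂ S]
        refine Cardinal.mk_le_of_surjective
          (f := fun f : (S →₀ ℂ) =>
            (⟨Finsupp.linearCombination ℂ ((↑) : S → H) f, LinearMap.mem_range_self _ f⟩ :
              LinearMap.range (Finsupp.linearCombination ℂ ((↑) : S → H)))) ?_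
        rintro ⟨x, f, hf⟩
        exact ⟨f, Subtype.ext hf⟩
      have heq : #(S →₀ ℂ) = max #S #ℂ := Cardinal.mk_finsupp_of_infinite' _ _
      rw [heq] at hsur
      exact lt_of_le_of_lt hsur (max_lt hlt hcont)
  -- closure has cardinality < θ
  set K : Submodule ℂ H := (Submodule.span ℂ S).topologicalClosure with hKdef
  have hKcard : #K < θ := by
    have hseq : ∀ x : (K : Set H), ∃ f : ℕ → (Submodule.span ℂ S : Set H),
        Filter.Tendsto (fun n => (f n : H)) Filter.atTop (nhds (x : H)) := by
      rintro ⟨x, hx⟩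
      have hcoe := Submodule.topologicalClosure_coe (Submodule.span ℂ S)
      have hx' : x ∈ closure (Submodule.span ℂ S : Set H) := by rw [← hcoe]; exact hx
      obtain ⟨f, hf, hft⟩ := mem_closure_iff_seq_limit.1 hx'
      exact ⟨fun n => ⟨f n, hf n⟩, hft⟩
    choose g hg using hseq
    have hinj : Function.Injective g := by
      intro x y hxy
      have h1 := hg x
      rw [hxy] at h1
      exact Subtype.coe_injective (tendsto_nhds_unique h1 (hg y))
    calc #(K : Set H) ≤ #(ℕ → (Submodule.span ℂ S : Set H)) := Cardinal.mk_le_of_injective hinj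
      _ = #(Submodule.span ℂ S : Set H) ^ ℵ₀ := by rw [← Cardinal.power_def, Cardinal.mk_nat]
      _ < θ := hpow _ hspan
  haveI : CompleteSpace K := by
    haveI : IsClosed (K : Set H) := Submodule.isClosed_topologicalClosure _
    exact IsClosed.completeSpace_coe
  -- projection is not injective
  have hninj : ¬ Function.Injective (fun y : Y => K.orthogonalProjectionOnto (y : H)) := by
    intro hinj
    exact absurd (hY ▸ Cardinal.mk_le_of_injective hinj) (not_le.2 hKcard)
  obtain ⟨y, y', heq, hne⟩ := Function.not_injective_iff.1 hninj
  set v : H := (y : H) - (y' : H) with hvdef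
  have hv0 : v ≠ 0 := sub_ne_zero.2 (fun h => hne (Subtype.coe_injective h))
  have hvK : v ∈ Kᗮ := by
    rw [← Submodule.orthogonalProjectionOnto_eq_zero_iff]
    simp only [hvdef, map_sub]
    rw [heq, sub_self]
  set w : H := ((‖v‖⁻¹ : ℝ) : ℂ) • v with hwdef
  have hwY : w ∈ Y := Y.smul_mem _ (Y.sub_mem y.2 y'.2)
  have hwn : ‖w‖ = 1 := by
    rw [hwdef, norm_smul, Complex.norm_real, Real.norm_eq_abs,
      abs_of_nonneg (by positivity), inv_mul_cancel₀ (norm_ne_zero_iff.2 hv0)]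
  have hwK : w ∈ Kᗮ := Kᗮ.smul_mem _ hvK
  have hSK : S ⊆ (K : Set H) := fun u hu =>
    Submodule.le_topologicalClosure _ (Submodule.subset_span hu)
  have hwS : w ∉ S := by
    intro hwmem
    have h0 : (inner ℂ w w : ℂ) = 0 :=
      (Submodule.mem_orthogonal K w).1 hwK w (hSK hwmem)
    rw [inner_self_eq_zero.1 h0, norm_zero] at hwn
    exact one_ne_zero hwn.symm
  have hext : S ∪ {w} ∈ P := by
    refine ⟨Set.union_subset hS.1 (by simpa using hwY), ?_, ?_⟩
    · rintro u (hu | hu)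
      · exact hS.2.1 u hu
      · rw [Set.mem_singleton_iff.1 hu]; exact hwn
    · rintro u (hu | hu) z (hz | hz) huz
      · exact hS.2.2 u hu z hz huz
      · rw [Set.mem_singleton_iff.1 hz]
        exact (Submodule.mem_orthogonal K w).1 hwK u (hSK hu)
      · rw [Set.mem_singleton_iff.1 hu]
        exact inner_eq_zero_symm.1 ((Submodule.mem_orthogonal K w).1 hwK z (hSK hz))
      · exact absurd (Set.mem_singleton_iff.1 hu ▸ Set.mem_singleton_iff.1 hz ▸ rfl) huz
  have hsub : S ∪ {w} ⊆ S := hSmax.2 hext Set.subset_union_left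
  exact hwS (hsub (Set.mem_union_right _ rfl))
end
end

section
/- Let θ be a regular cardinal with 2^ℵ₀ ≤ θ, and suppose there exists an infinite cardinal λ < θ with λ^ℵ₀ ≥ θ. Then there exists a linear subspace Y of ℓ²(θ) with cardinality #Y = θ that contains no orthonormal family of cardinality θ. -/
open Cardinal

noncomputable section

namespace Stmt13Aux

variable {ι : Type} [DecidableEq ι]

/-- coordinate evaluation as a continuous linear map on `ℓ²`. -/
def evalCLM (j : ι) : lp (fun _ : ι => ℂ) 2 →L[ℂ] ℂ :=
  LinearMap.mkContinuous
    { toFun := fun f => f j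
      map_add' := fun f g => by simp [lp.coeFn_add]
      map_smul' := fun c f => by simp [lp.coeFn_smul] }
    1 (fun f => by
      show ‖f j‖ ≤ 1 * ‖f‖; simpa using lp.norm_apply_le_norm (by norm_num : (2 : ENNReal) ≠ 0) f j)

lemma evalCLM_apply (j : ι) (f : lp (fun _ : ι => ℂ) 2) : evalCLM j f = f j := rfl

lemma summable_single (f : ℕ → ι) :
    Summable fun n => ((3:ℂ)⁻¹) ^ n • lp.single (E := fun _ : ι => ℂ) 2 (f n) 1 := by
  apply Summable.of_norm
  have hs : Summable fun n : ℕ => ((3:ℝ)⁻¹) ^ n :=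
    summable_geometric_of_lt_one (by norm_num) (by norm_num)
  apply hs.congr
  intro n
  rw [norm_smul]
  have : ‖lp.single (E := fun _ : ι => ℂ) 2 (f n) 1‖ = ‖(1:ℂ)‖ :=
    lp.norm_single (by norm_num) (f n) _
  simp [this]

/-- the vector encoding `f : ℕ → ι`. -/
def vf (f : ℕ → ι) : lp (fun _ : ι => ℂ) 2 :=
  ∑' n, ((3:ℂ)⁻¹) ^ n • lp.single 2 (f n) 1

lemma vf_apply (f : ℕ → ι) (j : ι) :
    (vf f : ∀ i : ι, ℂ) j = ∑' n, (if f n = j then ((3:ℂ)⁻¹) ^ n else 0) := by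
  have h := (evalCLM (ι := ι) j).map_tsum (summable_single f)
  rw [vf, ← evalCLM_apply, h]
  congr 1
  ext n
  rw [evalCLM_apply]
  rw [lp.coeFn_smul, Pi.smul_apply]
  rcases eq_or_ne (f n) j with hj | hj
  · subst hj; rw [lp.single_apply_self]; simp
  · rw [lp.single_apply_ne (E := fun _ : ι => ℂ) 2 (f n) (1:ℂ) hj.symm]; simp [hj]

def w (f : ℕ → ι) (j : ι) : ℝ := ∑' n, (if f n = j then ((3:ℝ)⁻¹) ^ n else 0)

lemma w_summable (f : ℕ → ι) (j : ι) :
    Summable fun n => (if f n = j then ((3:ℝ)⁻¹) ^ n else 0) := by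
  refine Summable.of_nonneg_of_le (fun n => ?_) (fun n => ?_)
    (summable_geometric_of_lt_one (r := (3:ℝ)⁻¹) (by norm_num) (by norm_num))
  · split <;> positivity
  · split <;> simp <;> positivity

lemma tsum_geo_shift (k : ℕ) : ∑' m : ℕ, ((3:ℝ)⁻¹) ^ (m + k) = ((3:ℝ)⁻¹) ^ k * (3/2) := by
  have : ∀ m : ℕ, ((3:ℝ)⁻¹) ^ (m + k) = ((3:ℝ)⁻¹) ^ m * ((3:ℝ)⁻¹) ^ k := fun m => pow_add _ _ _
  rw [tsum_congr this, tsum_mul_right,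
    tsum_geometric_of_lt_one (by norm_num) (by norm_num)]
  ring

lemma w_injective : Function.Injective fun f : ℕ → ι => w f := by
  intro f g hfg
  have hw : ∀ j, w f j = w g j := fun j => congrFun hfg j
  funext n
  induction n using Nat.strong_induction_on with
  | _ n IH =>
  by_contra hne
  set r : ℝ := (3:ℝ)⁻¹ with hr
  set j : ι := f n with hj
  have hgn : g n ≠ j := fun h => hne h.symm
  set tf : ℕ → ℝ := fun m => if f m = j then r ^ m else 0 with htf
  set tg : ℕ → ℝ := fun m => if g m = j then r ^ m else 0 with htg
  have hsf : Summable tf := w_summable f j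
  have hsg : Summable tg := w_summable g j
  have hsplitf := hsf.sum_add_tsum_nat_add n
  have hsplitg := hsg.sum_add_tsum_nat_add n
  have hpre : ∑ m ∈ Finset.range n, tf m = ∑ m ∈ Finset.range n, tg m := by
    refine Finset.sum_congr rfl fun m hm => ?_
    rw [htf, htg]
    simp only []
    rw [IH m (Finset.mem_range.1 hm)]
  have htail : ∑' m, tf (m + n) = ∑' m, tg (m + n) := by
    have h1 : w f j = w g j := hw j
    rw [w, w] at h1
    have := hsplitf.trans (h1.trans hsplitg.symm)
    rw [hpre] at this
    exact add_left_cancel this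
  have hlow : r ^ n ≤ ∑' m, tf (m + n) := by
    rw [((summable_nat_add_iff n).2 hsf).tsum_eq_zero_add]
    have h0 : tf (0 + n) = r ^ n := by simp [htf, hj]
    rw [h0]
    have : 0 ≤ ∑' m, tf (m + 1 + n) :=
      tsum_nonneg fun m => by rw [htf]; dsimp only; split <;> positivity
    linarith
  have hup : ∑' m, tg (m + n) ≤ r ^ n / 2 := by
    rw [((summable_nat_add_iff n).2 hsg).tsum_eq_zero_add]
    have h0 : tg (0 + n) = 0 := by
      rw [htg]; simp only [zero_add]; rw [if_neg hgn]
    rw [h0, zero_add]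
    have hle : ∑' m, tg (m + 1 + n) ≤ ∑' m : ℕ, r ^ (m + (n + 1)) := by
      refine Summable.tsum_le_tsum (fun m => ?_) ?_ ?_
      · rw [htg]; dsimp only
        have hidx : m + 1 + n = m + (n + 1) := by ring
        rw [hidx]
        split
        · exact le_rfl
        · positivity
      · have := (summable_nat_add_iff (n + 1)).2 hsg
        apply this.congr; intro m; congr 1; ring
      · exact (summable_nat_add_iff (n + 1)).2
          (summable_geometric_of_lt_one (r := (3:ℝ)⁻¹) (by norm_num) (by norm_num))
    rw [tsum_geo_shift (n + 1)] at hle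
    have : r ^ (n + 1) * (3 / 2) = r ^ n / 2 := by rw [pow_succ, hr]; ring
    rw [this] at hle
    exact hle
  have hrpos : (0:ℝ) < r ^ n := by rw [hr]; positivity
  rw [htail] at hlow
  have hcon := hlow.trans hup
  nlinarith [hrpos]

lemma vf_apply_real (f : ℕ → ι) (j : ι) :
    (vf f : ∀ i : ι, ℂ) j = ((w f j : ℝ) : ℂ) := by
  rw [vf_apply, w]
  have h := Complex.ofRealCLM.map_tsum (w_summable f j)
  simp only [Complex.ofRealCLM_apply] at h
  rw [h]
  exact tsum_congr fun n => by split <;> simp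

lemma vf_injective : Function.Injective (vf (ι := ι)) := by
  intro f g h
  apply w_injective
  funext j
  have := congrArg (fun v : lp (fun _ : ι => ℂ) 2 => (v : ∀ i : ι, ℂ) j) h
  simp only [vf_apply_real] at this
  exact_mod_cast this

lemma vf_support {A : Set ι} (f : ℕ → ι) (hf : ∀ n, f n ∈ A) {j : ι} (hj : j ∉ A) :
    (vf f : ∀ i : ι, ℂ) j = 0 := by
  rw [vf_apply]
  have : ∀ n : ℕ, (if f n = j then ((3:ℂ)⁻¹) ^ n else 0) = 0 := by
    intro n
    rw [if_neg]
    intro h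
    exact hj (h ▸ hf n)
  rw [tsum_congr this, tsum_zero]

lemma countable_ne_zero_of_orthonormal {S : Set (lp (fun _ : ι => ℂ) 2)}
    (hS : Orthonormal ℂ (fun s : S => (s : lp (fun _ : ι => ℂ) 2))) (j : ι) :
    {s : S | ((s : lp (fun _ : ι => ℂ) 2) : ∀ i : ι, ℂ) j ≠ 0}.Countable := by
  set x : lp (fun _ : ι => ℂ) 2 := lp.single 2 j 1 with hx
  have hsum : Summable fun s : S =>
      ‖(inner ℂ ((s : lp (fun _ : ι => ℂ) 2)) x : ℂ)‖ ^ 2 :=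
    hS.inner_products_summable x
  have hval : ∀ s : S, ‖(inner ℂ ((s : lp (fun _ : ι => ℂ) 2)) x : ℂ)‖
      = ‖((s : lp (fun _ : ι => ℂ) 2) : ∀ i : ι, ℂ) j‖ := by
    intro s
    rw [hx, lp.inner_single_right]
    simp [RCLike.inner_apply]
  set G : S → NNReal := fun s => ‖((s : lp (fun _ : ι => ℂ) 2) : ∀ i : ι, ℂ) j‖₊ ^ 2 with hG
  have hGsum : Summable G := by
    rw [← NNReal.summable_coe]
    refine hsum.congr fun s => ?_
    rw [hG]
    push_cast
    rw [hval s]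
  have hcs := Summable.countable_support_nnreal G hGsum
  refine hcs.mono ?_
  intro s hs
  simp only [Function.mem_support, hG, Set.mem_setOf_eq] at hs ⊢
  intro h0
  apply hs
  simpa using h0

end Stmt13Aux

/-- if `θ` is a regular cardinal with `2^ℵ₀ ≤ θ` and there is an infinite
`λ < θ` with `λ^ℵ₀ ≥ θ`, then `ℓ²(θ)` has a linear subspace `Y` of cardinality `θ`
containing no orthonormal family of cardinality `θ`. -/
theorem stmt13 (θ : Cardinal) (hreg : θ.IsRegular) (hc : 2 ^ ℵ₀ ≤ θ)
    (hlam : ∃ lam : Cardinal, ℵ₀ ≤ lam ∧ lam < θ ∧ θ ≤ lam ^ ℵ₀) :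
    ∃ Y : Submodule ℂ (L2 θ), #Y = θ ∧
      ¬ ∃ S : Set (L2 θ), S ⊆ (Y : Set (L2 θ)) ∧
          Orthonormal ℂ (fun s : S => (s : L2 θ)) ∧ #S = θ := by
  classical
  obtain ⟨lam, hlam0, hlamθ, hpow⟩ := hlam
  have hθinf : ℵ₀ ≤ θ := hreg.aleph0_le
  have hmkα : #θ.ord.ToType = θ := by rw [Cardinal.mk_toType, Cardinal.card_ord]
  obtain ⟨A, hA⟩ : ∃ A : Set θ.ord.ToType, #A = lam :=
    le_mk_iff_exists_set.1 (by rw [hmkα]; exact hlamθ.le)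
  -- the submodule of vectors supported on `A`
  let V : Submodule ℂ (L2 θ) :=
    { carrier := {v : L2 θ | ∀ j : θ.ord.ToType, j ∉ A → (v : ∀ i : θ.ord.ToType, ℂ) j = 0}
      add_mem' := fun hu hv j hj => by
        rw [lp.coeFn_add, Pi.add_apply, hu j hj, hv j hj, add_zero]
      zero_mem' := fun j hj => by rw [lp.coeFn_zero]; rfl
      smul_mem' := fun c v hv j hj => by
        rw [lp.coeFn_smul, Pi.smul_apply, hv j hj, smul_zero] }
  -- θ-many vectors in V
  have hθleV : θ ≤ #V := by
    have hinj : Function.Injective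
        (fun f : ℕ → A => (⟨Stmt13Aux.vf (fun n => (f n : θ.ord.ToType)),
          fun j hj => Stmt13Aux.vf_support _ (fun n => (f n).2) hj⟩ : V)) := by
      intro f g h
      have h2 := Stmt13Aux.vf_injective (congrArg Subtype.val h)
      funext n
      exact Subtype.ext (congrFun h2 n)
    calc θ ≤ lam ^ ℵ₀ := hpow
      _ = #(ℕ → A) := by rw [← hA, ← Cardinal.mk_nat, Cardinal.power_def]
      _ ≤ #V := Cardinal.mk_le_of_injective hinj
  obtain ⟨T₀, hT₀⟩ : ∃ T₀ : Set V, #T₀ = θ := le_mk_iff_exists_set.1 hθleV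
  set T : Set (L2 θ) := Subtype.val '' T₀ with hT
  have hTV : T ⊆ (V : Set (L2 θ)) := by rintro _ ⟨t, _, rfl⟩; exact t.2
  have hTcard : #T = θ := by rw [hT, Cardinal.mk_image_eq Subtype.val_injective, hT₀]
  refine ⟨Submodule.span ℂ T, ?_, ?_⟩
  · -- cardinality of the span is θ
    apply le_antisymm
    · have hTinf : Infinite T := by
        rw [Cardinal.infinite_iff, hTcard]; exact hθinf
      have heq : Submodule.span ℂ T =
          LinearMap.range (Finsupp.linearCombination ℂ ((↑) : T → L2 θ)) :=
        Finsupp.span_eq_range_linearCombination ℂ T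
      rw [heq]
      calc #(LinearMap.range (Finsupp.linearCombination ℂ ((↑) : T → L2 θ)))
          ≤ #(T →₀ ℂ) := Cardinal.mk_le_of_surjective
            (LinearMap.surjective_rangeRestrict _)
        _ = max #T #ℂ := Cardinal.mk_finsupp_of_infinite T ℂ
        _ ≤ θ := by
            rw [hTcard, mk_complex, ← Cardinal.two_power_aleph0]
            exact max_le le_rfl hc
    · have hle := Cardinal.mk_le_mk_of_subset
        (Submodule.subset_span (R := ℂ) (s := T))
      rwa [hTcard] at hle
  · -- no orthonormal family of size θ
    rintro ⟨S, hSY, hSon, hScard⟩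
    have hSV : ∀ s ∈ S, s ∈ V := fun s hs => (Submodule.span_le.2 hTV) (hSY hs)
    have hAne : Nonempty A := Cardinal.mk_ne_zero_iff.1 (by
      rw [hA]
      exact ne_of_gt (lt_of_lt_of_le Cardinal.aleph0_pos hlam0))
    have hcover : (Set.univ : Set S) =
        ⋃ j : A, {s : S | ((s : L2 θ) : ∀ i : θ.ord.ToType, ℂ) (j : θ.ord.ToType) ≠ 0} := by
      ext s
      simp only [Set.mem_univ, true_iff, Set.mem_iUnion, Set.mem_setOf_eq]
      by_contra hall
      push_neg at hall
      have hzero : (s : L2 θ) = 0 := by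
        apply lp.ext
        funext j
        rw [lp.coeFn_zero]
        by_cases hj : j ∈ A
        · exact hall ⟨j, hj⟩
        · exact hSV s s.2 j hj
      have hnorm := hSon.1 s
      simp [hzero] at hnorm
    have hbound : #S ≤ lam * ℵ₀ := by
      calc #S = #(Set.univ : Set S) := by rw [Cardinal.mk_univ]
        _ ≤ #A * ⨆ j : A, #{s : S |
              ((s : L2 θ) : ∀ i : θ.ord.ToType, ℂ) (j : θ.ord.ToType) ≠ 0} := by
            rw [hcover]; exact Cardinal.mk_iUnion_le _
        _ ≤ lam * ℵ₀ := by
            rw [hA]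
            refine mul_le_mul_right (ciSup_le' fun j => ?_) lam
            have := (Stmt13Aux.countable_ne_zero_of_orthonormal hSon (j : θ.ord.ToType)).to_subtype
            exact Cardinal.mk_le_aleph0
    rw [hScard] at hbound
    have hmul : lam * ℵ₀ = lam :=
      Cardinal.mul_eq_left hlam0 hlam0 Cardinal.aleph0_ne_zero
    rw [hmul] at hbound
    exact absurd hbound (not_le.2 hlamθ)

end
end

section
/- Let θ be a regular cardinal with θ > 2^ℵ₀. Then the following are equivalent: (1) for every cardinal λ < θ one has λ^ℵ₀ < θ; (2) every linear subspace Y of any complex Hilbert space with cardinality #Y = θ contains an orthonormal family of cardinality θ. -/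
open Cardinal
open scoped ENNReal NNReal

noncomputable section

lemma aux_mk_closure_le {X : Type} [MetricSpace X] (A : Set X) :
    #(closure A) ≤ #A ^ ℵ₀ := by
  rcases A.eq_empty_or_nonempty with rfl | hA
  · simp
  · have hx : ∀ x : closure A, ∃ u : ℕ → A,
        Filter.Tendsto (fun n => (u n : X)) Filter.atTop (nhds (x : X)) := by
      intro x
      obtain ⟨u, hu, hlim⟩ := mem_closure_iff_seq_limit.1 x.2
      exact ⟨fun n => ⟨u n, hu n⟩, hlim⟩
    choose f hf using hx
    have hinj : Function.Injective f := by
      intro x y hxy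
      have h2 : Filter.Tendsto (fun n => (f x n : X)) Filter.atTop (nhds (y : X)) := by
        rw [hxy]; exact hf y
      exact Subtype.ext (tendsto_nhds_unique (hf x) h2)
    calc #(closure A) ≤ #(ℕ → A) := Cardinal.mk_le_of_injective hinj
      _ = #A ^ ℵ₀ := by rw [← Cardinal.power_def, Cardinal.mk_nat]

lemma aux_mk_span_le {H : Type} [AddCommGroup H] [Module ℂ H] (T : Set H) :
    #(Submodule.span ℂ T) ≤ max #T (2 ^ ℵ₀) := by
  have hsur : #(Submodule.span ℂ T) ≤ #(T →₀ ℂ) := by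
    have h := Finsupp.range_linearCombination (R := ℂ) (v := (Subtype.val : T → H))
    rw [Subtype.range_coe] at h
    rw [← h]
    refine Cardinal.mk_le_of_surjective (f := fun c : (T →₀ ℂ) =>
      (⟨Finsupp.linearCombination ℂ (Subtype.val : T → H) c,
        LinearMap.mem_range_self _ c⟩ : LinearMap.range (Finsupp.linearCombination ℂ (Subtype.val : T → H)))) ?_
    rintro ⟨y, c, rfl⟩
    exact ⟨c, rfl⟩
  refine hsur.trans ?_
  rcases Set.finite_or_infinite T with hT | hT
  · haveI := hT.to_subtype
    have h1 : #(T →₀ ℂ) ≤ #(T → ℂ) := Cardinal.mk_le_of_injective (DFunLike.coe_injective)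
    have h2 : #(T → ℂ) = (2 ^ ℵ₀ : Cardinal) ^ #T := by
      rw [← Cardinal.power_def, mk_complex, two_power_aleph0]
    have h3 : (2 ^ ℵ₀ : Cardinal) ^ #T ≤ (2 ^ ℵ₀ : Cardinal) ^ ℵ₀ :=
      Cardinal.power_le_power_left (Cardinal.power_ne_zero _ two_ne_zero) (Cardinal.mk_le_aleph0)
    have h4 : (2 ^ ℵ₀ : Cardinal) ^ ℵ₀ = 2 ^ ℵ₀ := by
      rw [← Cardinal.power_mul, Cardinal.aleph0_mul_aleph0]
    exact le_max_of_le_right ((h1.trans (h2 ▸ h3)).trans h4.le)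
  · haveI := hT.to_subtype
    rw [Cardinal.mk_finsupp_of_infinite, mk_complex, two_power_aleph0]

lemma aux_orthonormal_mono {E : Type} [NormedAddCommGroup E] [InnerProductSpace ℂ E] {s t : Set E}
    (h : s ⊆ t) (ht : Orthonormal ℂ (fun x : t => (x : E))) :
    Orthonormal ℂ (fun x : s => (x : E)) := by
  classical
  have ht' : Orthonormal ℂ (Subtype.val : t → E) := ht
  rw [orthonormal_subtype_iff_ite] at ht' ⊢
  exact fun v hv w hw => ht' v (h hv) w (h hw)

lemma aux_fwd (θ : Cardinal) (hreg : θ.IsRegular) (hc : 2 ^ ℵ₀ < θ)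
    (h1 : ∀ lam < θ, lam ^ ℵ₀ < θ)
    (H : Type) [NormedAddCommGroup H] [InnerProductSpace ℂ H] [CompleteSpace H]
    (Y : Submodule ℂ H) (hY : #Y = θ) :
    ∃ S : Set H, S ⊆ (Y : Set H) ∧ Orthonormal ℂ (fun s : S => (s : H)) ∧ #S = θ := by
  classical
  set 𝒮 : Set (Set H) := {S : Set H | S ⊆ (Y : Set H) ∧ Orthonormal ℂ (Subtype.val : S → H)}
    with h𝒮
  have hz : ∀ c ⊆ 𝒮, IsChain (· ⊆ ·) c → ∃ ub ∈ 𝒮, ∀ s ∈ c, s ⊆ ub := by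
    intro c hc' hchain
    exact ⟨⋃₀ c, ⟨Set.sUnion_subset fun s hs => (hc' hs).1,
      orthonormal_sUnion_of_directed hchain.directedOn fun a ha => (hc' ha).2⟩,
      fun s hs => Set.subset_sUnion_of_mem hs⟩
  obtain ⟨M, hM⟩ := zorn_subset 𝒮 hz
  obtain ⟨hMY, hMon⟩ := hM.prop
  have hMcard : θ ≤ #M := by
    by_contra hlt
    push_neg at hlt
    set E := (Submodule.span ℂ M).topologicalClosure with hE
    have hEcard : #E < θ := by
      have hset : (E : Set H) = closure ((Submodule.span ℂ M : Set H)) :=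
        Submodule.topologicalClosure_coe _
      have e1 : #E = #(closure ((Submodule.span ℂ M : Set H))) :=
        Cardinal.mk_congr (Equiv.setCongr hset)
      have e2 : #(closure ((Submodule.span ℂ M : Set H))) ≤ (max #M (2 ^ ℵ₀)) ^ ℵ₀ :=
        (aux_mk_closure_le _).trans (Cardinal.power_le_power_right (aux_mk_span_le M))
      exact (e1 ▸ e2).trans_lt (h1 _ (max_lt hlt hc))
    have hninj : ¬ Function.Injective (fun y : Y => E.orthogonalProjectionOnto (y : H)) := by
      intro hinj
      have hle := Cardinal.mk_le_of_injective hinj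
      rw [hY] at hle
      exact absurd (hle.trans_lt hEcard) (lt_irrefl θ)
    rw [Function.not_injective_iff] at hninj
    obtain ⟨y₁, y₂, hproj, hne⟩ := hninj
    set y : H := (y₁ : H) - (y₂ : H) with hy
    have hyY : y ∈ Y := sub_mem y₁.2 y₂.2
    have hy0 : y ≠ 0 := sub_ne_zero.2 fun h => hne (Subtype.coe_injective h)
    have hyperp : y ∈ Eᗮ := by
      rw [← Submodule.orthogonalProjectionOnto_eq_zero_iff]
      show E.orthogonalProjectionOnto ((y₁ : H) - (y₂ : H)) = 0
      rw [map_sub, hproj, sub_self]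
    have hperpM : ∀ m ∈ M, (inner ℂ m y : ℂ) = 0 := fun m hm =>
      (Submodule.mem_orthogonal E y).1 hyperp m
        (Submodule.le_topologicalClosure _ (Submodule.subset_span hm))
    set e : H := ((‖y‖ : ℂ))⁻¹ • y with he
    have heY : e ∈ Y := Y.smul_mem _ hyY
    have henorm : ‖e‖ = 1 := norm_smul_inv_norm (𝕜 := ℂ) hy0
    have hperpM' : ∀ m ∈ M, (inner ℂ m e : ℂ) = 0 := by
      intro m hm
      rw [he, inner_smul_right, hperpM m hm, mul_zero]
    have heM : e ∉ M := by
      intro heM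
      have h0 := hperpM' e heM
      rw [@inner_self_eq_norm_sq_to_K ℂ] at h0
      rw [henorm] at h0
      norm_num at h0
    have hins : insert e M ∈ 𝒮 := by
      refine ⟨Set.insert_subset heY hMY, ?_⟩
      rw [orthonormal_subtype_iff_ite]
      have hMon' := hMon
      rw [orthonormal_subtype_iff_ite] at hMon'
      intro v hv w hw
      rcases hv with rfl | hv <;> rcases hw with rfl | hw
      · rw [if_pos rfl, @inner_self_eq_norm_sq_to_K ℂ, henorm]
        norm_num
      · rw [if_neg (fun h => heM (by rw [h]; exact hw)), ← inner_conj_symm,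
          hperpM' w hw, map_zero]
      · rw [if_neg (fun h => heM (by rw [← h]; exact hv))]
        exact hperpM' v hv
      · exact hMon' v hv w hw
    have heq := hM.eq_of_ge hins (Set.subset_insert e M)
    exact heM (heq ▸ Set.mem_insert e M)
  obtain ⟨S, hSM, hScard⟩ := Cardinal.le_mk_iff_exists_subset.1 hMcard
  exact ⟨S, hSM.trans hMY, aux_orthonormal_mono hSM hMon, hScard⟩

lemma aux_memlp (ι : Type) (g : ℕ → ι) [DecidableEq ι] :
    Memℓp (fun p : ι × ℕ => if g p.2 = p.1 then ((2:ℂ)⁻¹)^p.2 else 0) 2 := by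
  apply memℓp_gen
  have h2r : (2:ℝ≥0∞).toReal = 2 := by norm_num
  rw [h2r]
  set F : ι × ℕ → ℝ := fun p => ‖if g p.2 = p.1 then ((2:ℂ)⁻¹)^p.2 else 0‖ ^ (2:ℝ) with hF
  have hinj : Function.Injective (fun n : ℕ => ((g n, n) : ι × ℕ)) := by
    intro a b h
    exact congrArg Prod.snd h
  rw [← Function.Injective.summable_iff hinj ?_]
  · -- Summable (F ∘ i)
    have : (F ∘ fun n : ℕ => ((g n, n) : ι × ℕ)) = fun n => ((1:ℝ)/4) ^ n := by
      funext n
      show ‖if g n = g n then ((2:ℂ)⁻¹)^n else 0‖ ^ (2:ℝ) = ((1:ℝ)/4) ^ n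
      rw [if_pos rfl, norm_pow, norm_inv, RCLike.norm_two,
        show ((2:ℝ)⁻¹ ^ n : ℝ) ^ (2:ℝ) = ((2:ℝ)⁻¹ ^ n) ^ (2:ℕ) from Real.rpow_natCast _ 2]
      rw [← pow_mul, mul_comm, pow_mul]
      norm_num
    rw [this]
    exact summable_geometric_of_lt_one (by norm_num) (by norm_num)
  · rintro ⟨a, n⟩ hx
    have : ¬ g n = a := by
      intro h
      exact hx ⟨n, by simp [h]⟩
    simp only [F, if_neg this, norm_zero]
    rw [Real.zero_rpow (by norm_num)]
lemma aux_xinj (ι : Type) [DecidableEq ι] :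
    Function.Injective (fun g : ℕ → ι =>
      (⟨_, aux_memlp ι g⟩ : lp (fun _ : ι × ℕ => ℂ) 2)) := by
  intro g h hxy
  funext n
  by_contra hne
  have hco := congrArg
    (fun f : lp (fun _ : ι × ℕ => ℂ) 2 => (f : ∀ p : ι × ℕ, ℂ) (g n, n)) hxy
  simp only at hco
  rw [if_pos trivial, if_neg (fun hh : h n = g n => hne hh.symm)] at hco
  exact pow_ne_zero n (inv_ne_zero two_ne_zero) hco

lemma aux_orthocard (ι : Type) [Infinite ι] (S : Set (lp (fun _ : ι × ℕ => ℂ) 2))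
    (hSon : Orthonormal ℂ (fun s : S => (s : lp (fun _ : ι × ℕ => ℂ) 2))) :
    #S ≤ #ι := by
  classical
  haveI : Fact ((1:ℝ≥0∞) ≤ 2) := ⟨one_le_two⟩
  set A : ι × ℕ → Set S :=
    fun p => {s : S | ((s : lp (fun _ : ι × ℕ => ℂ) 2) : ∀ q : ι × ℕ, ℂ) p ≠ 0} with hA
  have hcount : ∀ p : ι × ℕ, (A p).Countable := by
    intro p
    have hsum := hSon.inner_products_summable (x := lp.single 2 p (1:ℂ))
    refine hsum.countable_support.mono ?_
    intro s hs
    have hne : ((s : lp (fun _ : ι × ℕ => ℂ) 2) : ∀ q : ι × ℕ, ℂ) p ≠ 0 := hs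
    simp only [Function.mem_support, lp.inner_single_right, RCLike.inner_apply, mul_one, one_mul]
    intro hzero
    apply hne
    have h6 : ‖(starRingEnd ℂ) (((s : lp (fun _ : ι × ℕ => ℂ) 2) : ∀ q : ι × ℕ, ℂ) p)‖ = 0 :=
      pow_eq_zero_iff two_ne_zero |>.1 hzero
    simpa using h6
  have hcover : (Set.univ : Set S) ⊆ ⋃ p : ι × ℕ, A p := by
    intro s _
    have hs0 : (s : lp (fun _ : ι × ℕ => ℂ) 2) ≠ 0 := hSon.ne_zero s
    have hex : ∃ p, ((s : lp (fun _ : ι × ℕ => ℂ) 2) : ∀ q : ι × ℕ, ℂ) p ≠ 0 := by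
      by_contra hall
      push_neg at hall
      exact hs0 (lp.ext (funext hall))
    obtain ⟨p, hp⟩ := hex
    exact Set.mem_iUnion.2 ⟨p, hp⟩
  have haleph : ℵ₀ ≤ #ι := Cardinal.infinite_iff.1 ‹Infinite ι›
  have h8 : #(ι × ℕ) = #ι := by
    rw [Cardinal.mk_prod, Cardinal.lift_id, Cardinal.lift_id, Cardinal.mk_nat]
    exact Cardinal.mul_eq_left haleph haleph Cardinal.aleph0_ne_zero
  calc #S = #(Set.univ : Set S) := Cardinal.mk_univ.symm
    _ ≤ #(⋃ p : ι × ℕ, A p) := Cardinal.mk_le_mk_of_subset hcover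
    _ ≤ #(ι × ℕ) * ⨆ p : ι × ℕ, #(A p) := Cardinal.mk_iUnion_le _
    _ ≤ #ι * ℵ₀ := by
        refine mul_le_mul' h8.le (ciSup_le' fun p => ?_)
        haveI := (hcount p).to_subtype
        exact Cardinal.mk_le_aleph0
    _ = #ι := Cardinal.mul_eq_left haleph haleph Cardinal.aleph0_ne_zero

lemma aux_bwd (θ : Cardinal) (hc : 2 ^ ℵ₀ < θ)
    (h2 : ∀ (H : Type) [NormedAddCommGroup H] [InnerProductSpace ℂ H] [CompleteSpace H]
      (Y : Submodule ℂ H), #Y = θ →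
      ∃ S : Set H, S ⊆ (Y : Set H) ∧ Orthonormal ℂ (fun s : S => (s : H)) ∧ #S = θ)
    (lam : Cardinal) (hlam : lam < θ) : lam ^ ℵ₀ < θ := by
  classical
  by_contra hge
  push_neg at hge
  have hlam2 : 2 ^ ℵ₀ < lam := by
    by_contra hle
    push_neg at hle
    have h4 : lam ^ ℵ₀ ≤ 2 ^ ℵ₀ := by
      calc lam ^ ℵ₀ ≤ (2 ^ ℵ₀) ^ ℵ₀ := Cardinal.power_le_power_right hle
        _ = 2 ^ ℵ₀ := by rw [← Cardinal.power_mul, Cardinal.aleph0_mul_aleph0]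
    exact absurd (hge.trans h4) (not_le.2 hc)
  have haleph : ℵ₀ ≤ lam := ((Cardinal.cantor ℵ₀).trans hlam2).le
  set ι := lam.out with hι
  have hmkι : #ι = lam := Cardinal.mk_out lam
  haveI : Infinite ι := Cardinal.infinite_iff.2 (by rw [hmkι]; exact haleph)
  haveI : Fact ((1:ℝ≥0∞) ≤ 2) := ⟨one_le_two⟩
  have hθH : θ ≤ #(lp (fun _ : ι × ℕ => ℂ) 2) := by
    have h5 : θ ≤ #(ℕ → ι) := by
      rw [← Cardinal.power_def, Cardinal.mk_nat, hmkι]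
      exact hge
    exact h5.trans (Cardinal.mk_le_of_injective (aux_xinj ι))
  obtain ⟨T, hT⟩ := Cardinal.le_mk_iff_exists_set.1 hθH
  set Y := Submodule.span ℂ T with hYdef
  have hYcard : #Y = θ := by
    refine le_antisymm ((aux_mk_span_le T).trans ?_) ?_
    · rw [hT]
      exact max_le le_rfl hc.le
    · rw [← hT]
      exact Cardinal.mk_le_mk_of_subset Submodule.subset_span
  obtain ⟨S, hSY, hSon, hScard⟩ := h2 (lp (fun _ : ι × ℕ => ℂ) 2) Y hYcard
  have hfinal : θ ≤ lam := by
    rw [← hScard, ← hmkι]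
    exact aux_orthocard ι S hSon
  exact absurd hfinal (not_le.2 hlam)

/-- for a regular cardinal `θ > 2^ℵ₀` the following are equivalent:
(1) `λ^ℵ₀ < θ` for every cardinal `λ < θ`;
(2) every linear subspace `Y` of any complex Hilbert space with `#Y = θ` contains an
orthonormal family of cardinality `θ`. -/
theorem stmt14 (θ : Cardinal) (hreg : θ.IsRegular) (hc : 2 ^ ℵ₀ < θ) :
    (∀ lam < θ, lam ^ ℵ₀ < θ) ↔
      (∀ (H : Type) [NormedAddCommGroup H] [InnerProductSpace ℂ H] [CompleteSpace H]
        (Y : Submodule ℂ H), #Y = θ →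
        ∃ S : Set H, S ⊆ (Y : Set H) ∧ Orthonormal ℂ (fun s : S => (s : H)) ∧ #S = θ) := by
  constructor
  · intro h1 H _ _ _ Y hY
    exact aux_fwd θ hreg hc h1 H Y hY
  · intro h2 lam hlam
    exact aux_bwd θ hc h2 lam hlam
end
end
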